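/- arXiv:1112.2861 — 12 statements merged into one kernel-verified Lean document; each statement's English description precedes it below -/
import Mathlib

section
/- For every n ≥ 1, every function f : 2^N → {0,1} with f(∅) = 0 on the voter set N = {1,…,n} is n-roughly weighted. Moreover, for every n ≥ 2 there exists such a function f (namely the one with f({i}) = 1 for all i ∈ N, f(N) = 0) that is not α-roughly weighted for any real number α with 1 ≤ α < n. Consequently the maximum of the critical threshold value μ(f) over all functions f : 2^N → {0,1} with f(∅) = 0 equals n. -/
open Finset

/-- `f` is `α`-roughly weighted: there are real weights such that every winning
coalition has weight at least `1` and every losing coalition weight at most `α`. -/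
def RoughlyWeighted {n : ℕ} (f : Finset (Fin n) → Bool) (α : ℝ) : Prop :=
  ∃ w : Fin n → ℝ,
    (∀ S : Finset (Fin n), f S = true → 1 ≤ ∑ i ∈ S, w i) ∧
    (∀ S : Finset (Fin n), f S = false → ∑ i ∈ S, w i ≤ α)

/-- The critical threshold value `μ(f)`: the smallest `α ≥ 1` such that `f` is
`α`-roughly weighted. -/
noncomputable def mu {n : ℕ} (f : Finset (Fin n) → Bool) : ℝ :=
  sInf {α : ℝ | 1 ≤ α ∧ RoughlyWeighted f α}

/-- A simple game: monotone, the empty coalition loses and the grand coalition wins. -/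
def SimpleGame {n : ℕ} (χ : Finset (Fin n) → Bool) : Prop :=
  χ ∅ = false ∧ χ Finset.univ = true ∧
    ∀ S T : Finset (Fin n), S ⊆ T → χ S = true → χ T = true

lemma part1 {n : ℕ} (hn : 1 ≤ n) (f : Finset (Fin n) → Bool) (hf : f ∅ = false) :
    RoughlyWeighted f (n : ℝ) := by
  refine ⟨fun _ => 1, fun S hS => ?_, fun S _ => ?_⟩
  · have hne : S ≠ ∅ := by rintro rfl; simp [hf] at hS
    have : 1 ≤ S.card := Finset.card_pos.mpr (Finset.nonempty_of_ne_empty hne)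
    have := (Nat.one_le_cast (α := ℝ)).mpr this
    simpa using this
  · have : (S.card : ℝ) ≤ n := by
      exact_mod_cast Nat.cast_le.mpr (le_trans (Finset.card_le_univ S) (by simp))
    simpa using this

/-- every function with `f ∅ = 0` on `n ≥ 1` voters is `n`-roughly
weighted; for `n ≥ 2` the function with all singletons winning and the grand
coalition losing is not `α`-roughly weighted for any `1 ≤ α < n`; consequently the
maximum critical threshold value over such functions equals `n`. -/
theorem boolean_max_critical_threshold (n : ℕ) (hn : 1 ≤ n) :
    (∀ f : Finset (Fin n) → Bool, f ∅ = false → RoughlyWeighted f (n : ℝ)) ∧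
    (2 ≤ n → ∃ f : Finset (Fin n) → Bool, f ∅ = false ∧
      (∀ i : Fin n, f {i} = true) ∧ f Finset.univ = false ∧
      ∀ α : ℝ, 1 ≤ α → α < (n : ℝ) → ¬ RoughlyWeighted f α) ∧
    IsGreatest {α : ℝ | ∃ f : Finset (Fin n) → Bool, f ∅ = false ∧ α = mu f}
      (n : ℝ) := by
  have hn1 : (1 : ℝ) ≤ (n : ℝ) := by exact_mod_cast hn
  -- the extremal function
  set g : Finset (Fin n) → Bool := fun S => decide (S.card = 1) with hg
  have hg0 : g ∅ = false := by simp [hg]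
  have hgs : ∀ i : Fin n, g {i} = true := by intro i; simp [hg]
  -- key: if g is α-roughly weighted with univ losing info
  have hkey : ∀ α : ℝ, RoughlyWeighted g α → g Finset.univ = false → (n : ℝ) ≤ α := by
    intro α ⟨w, hw1, hw2⟩ hu
    have h1 : ∀ i : Fin n, 1 ≤ w i := by
      intro i
      have := hw1 {i} (hgs i)
      simpa using this
    have h2 : (n : ℝ) ≤ ∑ i : Fin n, w i := by
      calc (n : ℝ) = ∑ _i : Fin n, (1 : ℝ) := by simp
        _ ≤ ∑ i : Fin n, w i := Finset.sum_le_sum fun i _ => h1 i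
    exact h2.trans (hw2 Finset.univ hu)
  refine ⟨part1 hn, ?_, ?_, ?_⟩
  · intro h2
    have hgu : g Finset.univ = false := by
      simp [hg, Finset.card_univ]
      omega
    exact ⟨g, hg0, hgs, hgu, fun α _ hα hrw => absurd (hkey α hrw hgu) (not_le.mpr hα)⟩
  · -- n ∈ set : mu g = n
    refine ⟨g, hg0, ?_⟩
    have hmem : (n : ℝ) ∈ {α : ℝ | 1 ≤ α ∧ RoughlyWeighted g α} :=
      ⟨hn1, part1 hn g hg0⟩
    have hlb : ∀ α ∈ {α : ℝ | 1 ≤ α ∧ RoughlyWeighted g α}, (n : ℝ) ≤ α := by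
      rintro α ⟨hα1, hrw⟩
      rcases eq_or_lt_of_le hn with h1 | h2
      · rw [← h1]; simpa using hα1
      · have hgu : g Finset.univ = false := by
          simp [hg, Finset.card_univ]; omega
        exact hkey α hrw hgu
    rw [mu]
    exact (le_antisymm (le_csInf ⟨_, hmem⟩ hlb) (csInf_le ⟨(n : ℝ), hlb⟩ hmem))
  · rintro α ⟨f, hf0, rfl⟩
    rw [mu]
    have hmem : (n : ℝ) ∈ {α : ℝ | 1 ≤ α ∧ RoughlyWeighted f α} :=
      ⟨hn1, part1 hn f hf0⟩
    exact csInf_le ⟨1, fun x hx => hx.1⟩ hmem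
end

section
/- Let χ be a complete simple game on n voters, numbered so that i ⊒ j whenever 1 ≤ i < j ≤ n, and let α ≥ 1 be such that χ is α-roughly weighted. Then there exist weights w_1 ≥ w_2 ≥ … ≥ w_n ≥ 0 such that ∑_{i∈S} w_i ≥ 1 for every winning coalition S and ∑_{i∈S} w_i ≤ α for every losing coalition S. -/
open Finset

/-- Isbell's desirability relation: `i ⊒ j` iff replacing `j` by `i` in any
coalition containing `j` but not `i` preserves winning. -/
def Desirable {n : ℕ} (χ : Finset (Fin n) → Bool) (i j : Fin n) : Prop :=
  ∀ S : Finset (Fin n), j ∈ S → i ∉ S →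
    χ S = true → χ (insert i (S.erase j)) = true

section Aux

open scoped Classical

variable {n : ℕ}

/-- Both constraints bundled. -/
def Cons (χ : Finset (Fin n) → Bool) (α : ℝ) (w : Fin n → ℝ) : Prop :=
  (∀ S : Finset (Fin n), χ S = true → 1 ≤ ∑ i ∈ S, w i) ∧
  (∀ S : Finset (Fin n), χ S = false → ∑ i ∈ S, w i ≤ α)

noncomputable def invs (w : Fin n → ℝ) : Finset (Fin n × Fin n) :=
  Finset.univ.filter fun pr => pr.1 < pr.2 ∧ w pr.1 < w pr.2

lemma mem_invs {w : Fin n → ℝ} {pr : Fin n × Fin n} :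
    pr ∈ invs w ↔ pr.1 < pr.2 ∧ w pr.1 < w pr.2 := by
  simp [invs]

lemma mem_image_swap {p q x : Fin n} {S : Finset (Fin n)} :
    x ∈ S.image (Equiv.swap p q) ↔ Equiv.swap p q x ∈ S := by
  constructor
  · rintro h
    obtain ⟨a, ha, rfl⟩ := Finset.mem_image.1 h
    simpa using ha
  · intro h
    exact Finset.mem_image.2 ⟨_, h, by simp⟩

lemma image_swap_of_iff {p q : Fin n} {S : Finset (Fin n)} (h : p ∈ S ↔ q ∈ S) :
    S.image (Equiv.swap p q) = S := by
  ext x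
  rw [mem_image_swap]
  rcases eq_or_ne x p with rfl | hxp
  · rw [Equiv.swap_apply_left]; exact ⟨h.2, h.1⟩
  rcases eq_or_ne x q with rfl | hxq
  · rw [Equiv.swap_apply_right]; exact ⟨h.1, h.2⟩
  · rw [Equiv.swap_apply_of_ne_of_ne hxp hxq]

lemma image_swap_of_mem {p q : Fin n} {S : Finset (Fin n)} (hpq : p ≠ q)
    (hq : q ∈ S) (hp : p ∉ S) :
    S.image (Equiv.swap p q) = insert p (S.erase q) := by
  ext x
  rw [mem_image_swap, Finset.mem_insert, Finset.mem_erase]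
  rcases eq_or_ne x p with rfl | hxp
  · rw [Equiv.swap_apply_left]; simp [hq]
  rcases eq_or_ne x q with rfl | hxq
  · rw [Equiv.swap_apply_right]
    simp [hp, hxp]
  · rw [Equiv.swap_apply_of_ne_of_ne hxp hxq]
    simp [hxp, hxq]

lemma sum_swap_eq {p q : Fin n} (w : Fin n → ℝ) (S : Finset (Fin n)) :
    ∑ i ∈ S, w (Equiv.swap p q i) = ∑ i ∈ S.image (Equiv.swap p q), w i :=
  (Finset.sum_image (fun x _ y _ hxy => (Equiv.swap p q).injective hxy)).symm

lemma losing_swap {χ : Finset (Fin n) → Bool} {p q : Fin n} (hd : Desirable χ p q)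
    (hpq : p ≠ q) {S : Finset (Fin n)} (hp : p ∈ S) (hq : q ∉ S) (hl : χ S = false) :
    χ (insert q (S.erase p)) = false := by
  by_contra hcon
  have htrue : χ (insert q (S.erase p)) = true := by
    cases hx : χ (insert q (S.erase p)) with
    | false => exact absurd hx hcon
    | true => rfl
  have hqe : q ∉ S.erase p := fun h => hq (Finset.mem_of_mem_erase h)
  have h2 := hd (insert q (S.erase p)) (Finset.mem_insert_self _ _)
    (by
      intro hmem
      rcases Finset.mem_insert.1 hmem with h | h
      · exact hpq h
      · exact (Finset.notMem_erase p S) h)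
    htrue
  rw [Finset.erase_insert hqe, Finset.insert_erase hp] at h2
  rw [h2] at hl
  exact Bool.noConfusion hl

lemma cons_swap {χ : Finset (Fin n) → Bool} {α : ℝ} {w : Fin n → ℝ} {p q : Fin n}
    (hd : Desirable χ p q) (hpq : p < q) (hw : w p < w q) (hc : Cons χ α w) :
    Cons χ α (fun i => w (Equiv.swap p q i)) := by
  have hne : p ≠ q := ne_of_lt hpq
  constructor
  · intro S hS
    rw [sum_swap_eq]
    by_cases hp : p ∈ S <;> by_cases hq : q ∈ S
    · rw [image_swap_of_iff (by tauto)]; exact hc.1 S hS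
    · rw [show S.image (Equiv.swap p q) = insert q (S.erase p) from by
        rw [Equiv.swap_comm]; exact image_swap_of_mem (Ne.symm hne) hp hq]
      rw [Finset.sum_insert (fun h => hq (Finset.mem_of_mem_erase h))]
      have h1 : w p + ∑ i ∈ S.erase p, w i = ∑ i ∈ S, w i := Finset.add_sum_erase S w hp
      have h2 := hc.1 S hS
      linarith
    · rw [image_swap_of_mem hne hq hp]
      exact hc.1 _ (hd S hq hp hS)
    · rw [image_swap_of_iff (by tauto)]; exact hc.1 S hS
  · intro S hS
    rw [sum_swap_eq]
    by_cases hp : p ∈ S <;> by_cases hq : q ∈ S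
    · rw [image_swap_of_iff (by tauto)]; exact hc.2 S hS
    · rw [show S.image (Equiv.swap p q) = insert q (S.erase p) from by
        rw [Equiv.swap_comm]; exact image_swap_of_mem (Ne.symm hne) hp hq]
      exact hc.2 _ (losing_swap hd hne hp hq hS)
    · rw [image_swap_of_mem hne hq hp]
      rw [Finset.sum_insert (fun h => hp (Finset.mem_of_mem_erase h))]
      have h1 : w q + ∑ i ∈ S.erase q, w i = ∑ i ∈ S, w i := Finset.add_sum_erase S w hq
      have h2 := hc.2 S hS
      linarith
    · rw [image_swap_of_iff (by tauto)]; exact hc.2 S hS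

lemma invs_swap_lt {w : Fin n → ℝ} {p q : Fin n} (hq : (q : ℕ) = (p : ℕ) + 1)
    (hw : w p < w q) :
    (invs fun i => w (Equiv.swap p q i)).card < (invs w).card := by
  have hpq : p < q := by rw [Fin.lt_def]; omega
  have hne : p ≠ q := ne_of_lt hpq
  have hmem : (p, q) ∈ invs w := mem_invs.2 ⟨hpq, hw⟩
  have hmap : ∀ pr ∈ invs (fun i => w (Equiv.swap p q i)),
      (Equiv.swap p q pr.1, Equiv.swap p q pr.2) ∈ (invs w).erase (p, q) := by
    rintro ⟨a, b⟩ hab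
    obtain ⟨hlt, hwlt⟩ := mem_invs.1 hab
    simp only at hlt hwlt
    have hnotpq : ¬(a = p ∧ b = q) := by
      rintro ⟨rfl, rfl⟩
      rw [Equiv.swap_apply_left, Equiv.swap_apply_right] at hwlt
      linarith
    have key : ∀ x : Fin n, ((Equiv.swap p q x : Fin n) : ℕ) =
        if (x : ℕ) = (p : ℕ) then (q : ℕ) else if (x : ℕ) = (q : ℕ) then (p : ℕ) else (x : ℕ) := by
      intro x
      by_cases h1 : x = p
      · rw [h1, Equiv.swap_apply_left, if_pos rfl]
      by_cases h2 : x = q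
      · rw [h2, Equiv.swap_apply_right, if_neg (by omega), if_pos rfl]
      · rw [Equiv.swap_apply_of_ne_of_ne h1 h2,
          if_neg (fun h => h1 (Fin.ext h)), if_neg (fun h => h2 (Fin.ext h))]
    have hord : Equiv.swap p q a < Equiv.swap p q b := by
      have hlt' : (a : ℕ) < (b : ℕ) := hlt
      have hnot' : (a : ℕ) ≠ (p : ℕ) ∨ (b : ℕ) ≠ (q : ℕ) := by
        by_contra hcc
        push_neg at hcc
        exact hnotpq ⟨Fin.ext hcc.1, Fin.ext hcc.2⟩
      rw [Fin.lt_def, key a, key b]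
      split_ifs <;> omega
    refine Finset.mem_erase.2 ⟨?_, mem_invs.2 ⟨hord, hwlt⟩⟩
    intro hcon
    rw [Prod.ext_iff] at hcon
    obtain ⟨h1, h2⟩ := hcon
    simp only at h1 h2
    have ha : a = q := by
      have := congrArg (Equiv.swap p q) h1
      simpa using this
    have hb : b = p := by
      have := congrArg (Equiv.swap p q) h2
      simpa using this
    subst ha; subst hb
    rw [Fin.lt_def] at hlt; omega
  have hinj : Set.InjOn (fun pr : Fin n × Fin n => (Equiv.swap p q pr.1, Equiv.swap p q pr.2))
      (invs fun i => w (Equiv.swap p q i)) := by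
    rintro ⟨a, b⟩ _ ⟨c, d⟩ _ hcd
    rw [Prod.ext_iff] at hcd
    obtain ⟨h1, h2⟩ := hcd
    simp only at h1 h2
    exact Prod.ext ((Equiv.swap p q).injective h1) ((Equiv.swap p q).injective h2)
  calc (invs fun i => w (Equiv.swap p q i)).card
      ≤ ((invs w).erase (p, q)).card := Finset.card_le_card_of_injOn _ hmap hinj
    _ < (invs w).card := Finset.card_erase_lt_of_mem hmem

lemma adjacent_inversion {w : Fin n → ℝ}
    (h : ∃ i j : Fin n, i < j ∧ w i < w j) :
    ∃ p q : Fin n, (q : ℕ) = (p : ℕ) + 1 ∧ w p < w q := by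
  by_contra hcon
  push_neg at hcon
  have hanti : ∀ d : ℕ, ∀ i j : Fin n, (j : ℕ) = (i : ℕ) + d → w j ≤ w i := by
    intro d
    induction d with
    | zero => intro i j hij; have : j = i := Fin.ext (by omega); rw [this]
    | succ d ih =>
      intro i j hij
      have hd : (i : ℕ) + d < n := by have := j.isLt; omega
      set k : Fin n := ⟨(i : ℕ) + d, hd⟩
      have h1 : w k ≤ w i := ih i k rfl
      have h2 : w j ≤ w k := hcon k j (by simp [k]; omega)
      linarith
  obtain ⟨i, j, hij, hwij⟩ := h
  have : w j ≤ w i := hanti ((j : ℕ) - (i : ℕ)) i j (by rw [Fin.lt_def] at hij; omega)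
  linarith

lemma sort_weights {χ : Finset (Fin n) → Bool} {α : ℝ}
    (hsorted : ∀ i j : Fin n, i < j → Desirable χ i j) :
    ∀ N : ℕ, ∀ w : Fin n → ℝ, (invs w).card ≤ N → Cons χ α w →
    ∃ w' : Fin n → ℝ, (∀ i j : Fin n, i ≤ j → w' j ≤ w' i) ∧ Cons χ α w' := by
  intro N
  induction N with
  | zero =>
    intro w hcard hc
    refine ⟨w, ?_, hc⟩
    intro i j hij
    rcases eq_or_lt_of_le hij with rfl | hlt
    · exact le_refl _
    by_contra hcon
    push_neg at hcon
    have : (i, j) ∈ invs w := mem_invs.2 ⟨hlt, hcon⟩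
    have := Finset.card_pos.2 ⟨_, this⟩
    omega
  | succ N ih =>
    intro w hcard hc
    by_cases hmon : ∀ i j : Fin n, i ≤ j → w j ≤ w i
    · exact ⟨w, hmon, hc⟩
    · push_neg at hmon
      obtain ⟨i, j, hij, hwij⟩ := hmon
      have hij' : i < j := lt_of_le_of_ne hij (by rintro rfl; exact lt_irrefl _ hwij)
      obtain ⟨p, q, hq, hw⟩ := adjacent_inversion ⟨i, j, hij', hwij⟩
      have hpq : p < q := by rw [Fin.lt_def]; omega
      have hlt := invs_swap_lt hq hw
      exact ih _ (by omega) (cons_swap (hsorted p q hpq) hpq hw hc)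

end Aux

/-- an `α`-roughly weighted complete simple game (voters numbered with
decreasing desirability) admits an `α`-rough weighting with
`w 1 ≥ w 2 ≥ … ≥ w n ≥ 0`. -/
theorem complete_simple_game_monotone_weights (n : ℕ) (χ : Finset (Fin n) → Bool)
    (hχ : SimpleGame χ)
    (hcomplete : ∀ i j : Fin n, Desirable χ i j ∨ Desirable χ j i)
    (hsorted : ∀ i j : Fin n, i < j → Desirable χ i j)
    (α : ℝ) (hα : 1 ≤ α) (h : RoughlyWeighted χ α) :
    ∃ w : Fin n → ℝ, (∀ i j : Fin n, i ≤ j → w j ≤ w i) ∧ (∀ i : Fin n, 0 ≤ w i) ∧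
      (∀ S : Finset (Fin n), χ S = true → 1 ≤ ∑ i ∈ S, w i) ∧
      (∀ S : Finset (Fin n), χ S = false → ∑ i ∈ S, w i ≤ α) := by
  obtain ⟨w0, hw1, hw2⟩ := h
  obtain ⟨w', hmon, hc'⟩ := sort_weights hsorted ((invs w0).card) w0 le_rfl ⟨hw1, hw2⟩
  classical
  refine ⟨fun i => max (w' i) 0, ?_, fun i => le_max_right _ _, ?_, ?_⟩
  · intro i j hij
    exact max_le_max (hmon i j hij) le_rfl
  · intro S hS
    calc (1 : ℝ) ≤ ∑ i ∈ S, w' i := hc'.1 S hS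
      _ ≤ ∑ i ∈ S, max (w' i) 0 := Finset.sum_le_sum (fun i _ => le_max_left _ _)
  · intro S hS
    have hsplit : ∑ i ∈ S, max (w' i) 0 = ∑ i ∈ S.filter (fun i => 0 ≤ w' i), w' i := by
      rw [← Finset.sum_filter_add_sum_filter_not S (fun i => 0 ≤ w' i) (fun i => max (w' i) 0)]
      have h1 : ∑ i ∈ S.filter (fun i => 0 ≤ w' i), max (w' i) 0
          = ∑ i ∈ S.filter (fun i => 0 ≤ w' i), w' i :=
        Finset.sum_congr rfl (fun i hi => max_eq_left (Finset.mem_filter.1 hi).2)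
      have h2 : ∑ i ∈ S.filter (fun i => ¬ 0 ≤ w' i), max (w' i) 0 = 0 :=
        Finset.sum_eq_zero
          (fun i hi => max_eq_right (le_of_lt (lt_of_not_ge (Finset.mem_filter.1 hi).2)))
      rw [h1, h2, add_zero]
    rw [hsplit]
    have hfl : χ (S.filter fun i => 0 ≤ w' i) = false := by
      cases hx : χ (S.filter fun i => 0 ≤ w' i) with
      | false => rfl
      | true =>
        have := hχ.2.2 _ S (Finset.filter_subset _ _) hx
        rw [this] at hS
        exact Bool.noConfusion hS
    exact hc'.2 _ hfl
end

section
/- Let χ be a complete simple game on n voters, numbered so that i ⊒ j whenever 1 ≤ i < j ≤ n, and let α ≥ 1 be such that χ is α-roughly weighted. Then there exist weights w_1 ≥ w_2 ≥ … ≥ w_n ≥ 0 with w_i = w_j whenever i □ j (i.e., voters of the same equivalence class receive the same weight), such that ∑_{i∈S} w_i ≥ 1 for every winning coalition S and ∑_{i∈S} w_i ≤ α for every losing coalition S. -/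
open Finset

lemma desirable_refl {n : ℕ} (χ : Finset (Fin n) → Bool) (i : Fin n) : Desirable χ i i := by
  intro S hiS hiS' _
  exact absurd hiS hiS'

lemma desirable_trans {n : ℕ} {χ : Finset (Fin n) → Bool} {i k j : Fin n}
    (h1 : Desirable χ i k) (h2 : Desirable χ k j) : Desirable χ i j := by
  rcases eq_or_ne i k with rfl | hik
  · exact h2
  rcases eq_or_ne k j with rfl | hkj
  · exact h1
  intro S hjS hiS hS
  have hij : i ≠ j := fun h => hiS (h ▸ hjS)
  by_cases hkS : k ∈ S
  · have h3 := h1 S hkS hiS hS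
    have hj1 : j ∈ insert i (S.erase k) :=
      Finset.mem_insert_of_mem (Finset.mem_erase.2 ⟨hkj.symm, hjS⟩)
    have hk1 : k ∉ insert i (S.erase k) := by
      simp [Finset.mem_insert, Finset.mem_erase, Ne.symm hik]
    have h4 := h2 _ hj1 hk1 h3
    have hset : insert k ((insert i (S.erase k)).erase j) = insert i (S.erase j) := by
      ext x
      simp only [Finset.mem_insert, Finset.mem_erase]
      constructor
      · rintro (rfl | ⟨hxj, (rfl | ⟨hxk, hxS⟩)⟩)
        · exact Or.inr ⟨hkj, hkS⟩
        · exact Or.inl rfl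
        · exact Or.inr ⟨hxj, hxS⟩
      · rintro (rfl | ⟨hxj, hxS⟩)
        · exact Or.inr ⟨hij, Or.inl rfl⟩
        · by_cases hxk : x = k
          · exact Or.inl hxk
          · exact Or.inr ⟨hxj, Or.inr ⟨hxk, hxS⟩⟩
    rwa [hset] at h4
  · have h3 := h2 S hjS hkS hS
    have hk1 : k ∈ insert k (S.erase j) := Finset.mem_insert_self _ _
    have hi1 : i ∉ insert k (S.erase j) := by
      simp only [Finset.mem_insert, Finset.mem_erase]
      rintro (rfl | ⟨_, hxS⟩)
      · exact hik rfl
      · exact hiS hxS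
    have h4 := h1 _ hk1 hi1 h3
    rwa [Finset.erase_insert (by simp [Finset.mem_erase, hkS])] at h4

lemma bool_eq_of_imp {a b : Bool} (h1 : a = true → b = true) (h2 : b = true → a = true) :
    a = b := by
  cases a <;> cases b <;> simp_all

lemma mem_image_swap_s5 {α : Type*} [DecidableEq α] (i j x : α) (S : Finset α) :
    x ∈ S.image (Equiv.swap i j) ↔ Equiv.swap i j x ∈ S := by
  simp only [Finset.mem_image]
  constructor
  · rintro ⟨y, hy, rfl⟩
    rwa [Equiv.swap_apply_self]
  · intro h
    exact ⟨Equiv.swap i j x, h, Equiv.swap_apply_self _ _ _⟩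

lemma image_swap_both {α : Type*} [DecidableEq α] {i j : α} {S : Finset α}
    (h : i ∈ S ↔ j ∈ S) : S.image (Equiv.swap i j) = S := by
  ext x
  rw [mem_image_swap_s5]
  rcases eq_or_ne x i with rfl | hxi
  · rw [Equiv.swap_apply_left]; exact h.symm
  rcases eq_or_ne x j with rfl | hxj
  · rw [Equiv.swap_apply_right]; exact h
  · rw [Equiv.swap_apply_of_ne_of_ne hxi hxj]

lemma image_swap_single {α : Type*} [DecidableEq α] {i j : α} {S : Finset α}
    (hj : j ∈ S) (hi : i ∉ S) : S.image (Equiv.swap i j) = insert i (S.erase j) := by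
  have hne : i ≠ j := by rintro rfl; exact hi hj
  ext x
  rw [mem_image_swap_s5, Finset.mem_insert, Finset.mem_erase]
  rcases eq_or_ne x i with rfl | hxi
  · simp [Equiv.swap_apply_left, hj]
  rcases eq_or_ne x j with rfl | hxj
  · simp [Equiv.swap_apply_right, hi, hne.symm]
  · rw [Equiv.swap_apply_of_ne_of_ne hxi hxj]; simp [hxi, hxj]

noncomputable def invSet {n : ℕ} (w : Fin n → ℝ) : Finset (Fin n × Fin n) := by
  classical exact Finset.univ.filter (fun p => p.1 < p.2 ∧ w p.1 < w p.2)

lemma mem_invSet {n : ℕ} {w : Fin n → ℝ} {p : Fin n × Fin n} :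
    p ∈ invSet w ↔ p.1 < p.2 ∧ w p.1 < w p.2 := by
  classical simp [invSet]

lemma inv_card_lt {n : ℕ} {w : Fin n → ℝ} {i j : Fin n} (hij : i < j) (hw : w i < w j) :
    (invSet (fun k => w (Equiv.swap i j k))).card < (invSet w).card := by
  set τ := Equiv.swap i j with hτdef
  have hτi : τ i = j := Equiv.swap_apply_left i j
  have hτj : τ j = i := Equiv.swap_apply_right i j
  have hτo : ∀ x, x ≠ i → x ≠ j → τ x = x := fun x h1 h2 => Equiv.swap_apply_of_ne_of_ne h1 h2
  have hττ : ∀ x, τ (τ x) = x := fun x => Equiv.swap_apply_self i j x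
  set F : Fin n × Fin n → Fin n × Fin n := fun p => if τ p.1 < τ p.2 then (τ p.1, τ p.2) else p
    with hF
  have hmaps : ∀ p ∈ invSet (fun k => w (τ k)), F p ∈ (invSet w).erase (i, j) := by
    rintro ⟨a, b⟩ hp
    obtain ⟨h1, h2⟩ := mem_invSet.1 hp
    simp only at h1 h2
    by_cases hc : τ a < τ b
    · simp only [hF, if_pos hc]
      refine Finset.mem_erase.2 ⟨?_, mem_invSet.2 ⟨hc, h2⟩⟩
      intro heq
      have ha : a = j := by
        have h' : τ a = i := congrArg Prod.fst heq
        have := congrArg τ h'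
        rwa [hττ, hτi] at this
      have hb : b = i := by
        have h' : τ b = j := congrArg Prod.snd heq
        have := congrArg τ h'
        rwa [hττ, hτj] at this
      rw [ha, hb] at h1
      exact absurd (hij.trans h1) (lt_irrefl i)
    · simp only [hF, if_neg hc]
      rcases eq_or_ne a i with hai | hai
      · rw [hai] at h1 h2 hc ⊢
        rcases eq_or_ne b j with hbj | hbj
        · rw [hbj] at h2
          rw [hτi, hτj] at h2
          exact absurd (h2.trans hw) (lt_irrefl _)
        · have hbi : b ≠ i := ne_of_gt h1
          rw [hτi, hτo b hbi hbj] at h2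
          refine Finset.mem_erase.2 ⟨?_, mem_invSet.2 ⟨h1, hw.trans h2⟩⟩
          exact fun heq => hbj (congrArg Prod.snd heq)
      · rcases eq_or_ne a j with haj | haj
        · rw [haj] at h1 hc
          have hbj : b ≠ j := ne_of_gt h1
          have hbi : b ≠ i := fun h => absurd (h ▸ (hij.trans h1)) (lt_irrefl i)
          rw [hτj, hτo b hbi hbj] at hc
          exact absurd (hij.trans h1) hc
        · rcases eq_or_ne b i with hbi | hbi
          · rw [hbi] at h1 hc
            rw [hτo a hai haj, hτi] at hc
            exact absurd (h1.trans hij) hc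
          rcases eq_or_ne b j with hbj | hbj
          · rw [hbj] at h1 h2 ⊢
            rw [hτo a hai haj, hτj] at h2
            refine Finset.mem_erase.2 ⟨?_, mem_invSet.2 ⟨h1, h2.trans hw⟩⟩
            exact fun heq => hai (congrArg Prod.fst heq)
          · rw [hτo a hai haj, hτo b hbi hbj] at hc
            exact absurd h1 hc
  have hinj : Set.InjOn F (invSet (fun k => w (τ k))) := by
    rintro ⟨a, b⟩ hp ⟨c, d⟩ hq heq
    obtain ⟨h1, _⟩ := mem_invSet.1 hp
    obtain ⟨h3, _⟩ := mem_invSet.1 hq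
    simp only at h1 h3
    by_cases hcp : τ a < τ b <;> by_cases hcq : τ c < τ d <;>
      simp only [hF, if_pos, if_neg, hcp, hcq, if_true, if_false] at heq
    · have e1 : τ a = τ c := congrArg Prod.fst heq
      have e2 : τ b = τ d := congrArg Prod.snd heq
      exact Prod.ext (τ.injective e1) (τ.injective e2)
    · exfalso
      have e1 : τ a = c := congrArg Prod.fst heq
      have e2 : τ b = d := congrArg Prod.snd heq
      rw [← e1, ← e2, hττ, hττ] at hcq
      exact hcq h1
    · exfalso
      have e1 : a = τ c := congrArg Prod.fst heq
      have e2 : b = τ d := congrArg Prod.snd heq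
      rw [e1, e2, hττ, hττ] at hcp
      exact hcp h3
    · exact heq
  have hle := Finset.card_le_card_of_injOn F hmaps hinj
  have hlt : ((invSet w).erase (i, j)).card < (invSet w).card :=
    Finset.card_erase_lt_of_mem (mem_invSet.2 ⟨hij, hw⟩)
  exact lt_of_le_of_lt hle hlt

lemma swap_bounds {n : ℕ} {χ : Finset (Fin n) → Bool} {α : ℝ} {i j : Fin n}
    (hd : Desirable χ i j) (hij : i ≠ j) {w : Fin n → ℝ}
    (h1 : ∀ S, χ S = true → 1 ≤ ∑ k ∈ S, w k)
    (h2 : ∀ S, χ S = false → ∑ k ∈ S, w k ≤ α)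
    (hw : w i ≤ w j) :
    (∀ S, χ S = true → 1 ≤ ∑ k ∈ S, w (Equiv.swap i j k)) ∧
    (∀ S, χ S = false → ∑ k ∈ S, w (Equiv.swap i j k) ≤ α) := by
  have hsum : ∀ S : Finset (Fin n),
      ∑ k ∈ S, w (Equiv.swap i j k) = ∑ x ∈ S.image (Equiv.swap i j), w x :=
    fun S => (Finset.sum_image (fun x _ y _ h => (Equiv.swap i j).injective h)).symm
  constructor
  · intro S hS
    rw [hsum]
    by_cases hiS : i ∈ S <;> by_cases hjS : j ∈ S
    · rw [image_swap_both (by tauto)]; exact h1 S hS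
    · -- i ∈ S, j ∉ S : image = insert j (S.erase i), sum increases
      rw [Equiv.swap_comm, image_swap_single hiS hjS]
      have e1 : ∑ x ∈ insert j (S.erase i), w x = w j + ∑ x ∈ S.erase i, w x :=
        Finset.sum_insert (by simp [Finset.mem_erase, hjS])
      have e2 : w i + ∑ x ∈ S.erase i, w x = ∑ x ∈ S, w x := Finset.add_sum_erase S w hiS
      have := h1 S hS
      linarith
    · -- j ∈ S, i ∉ S : image is winning by desirability
      rw [image_swap_single hjS hiS]
      exact h1 _ (hd S hjS hiS hS)
    · rw [image_swap_both (by tauto)]; exact h1 S hS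
  · intro S hS
    rw [hsum]
    by_cases hiS : i ∈ S <;> by_cases hjS : j ∈ S
    · rw [image_swap_both (by tauto)]; exact h2 S hS
    · -- i ∈ S, j ∉ S : image is losing (else S would be winning)
      rw [Equiv.swap_comm, image_swap_single hiS hjS]
      refine h2 _ ?_
      cases hT : χ (insert j (S.erase i)) with
      | false => rfl
      | true =>
        exfalso
        have hjT : j ∈ insert j (S.erase i) := Finset.mem_insert_self _ _
        have hiT : i ∉ insert j (S.erase i) := by
          simp only [Finset.mem_insert, Finset.mem_erase]
          rintro (h | ⟨h, _⟩) <;> [exact hij h; exact h rfl]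
        have := hd _ hjT hiT hT
        rw [Finset.erase_insert (by simp [Finset.mem_erase, hjS]),
          Finset.insert_erase hiS] at this
        rw [this] at hS
        simp at hS
    · -- j ∈ S, i ∉ S : sum decreases
      rw [image_swap_single hjS hiS]
      have e1 : ∑ x ∈ insert i (S.erase j), w x = w i + ∑ x ∈ S.erase j, w x :=
        Finset.sum_insert (by simp [Finset.mem_erase, hiS])
      have e2 : w j + ∑ x ∈ S.erase j, w x = ∑ x ∈ S, w x := Finset.add_sum_erase S w hjS
      have := h2 S hS
      linarith
    · rw [image_swap_both (by tauto)]; exact h2 S hS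

lemma exists_sorted {n : ℕ} {χ : Finset (Fin n) → Bool} {α : ℝ}
    (hsorted : ∀ i j : Fin n, i < j → Desirable χ i j) (w : Fin n → ℝ)
    (h1 : ∀ S, χ S = true → 1 ≤ ∑ k ∈ S, w k)
    (h2 : ∀ S, χ S = false → ∑ k ∈ S, w k ≤ α) :
    ∃ w' : Fin n → ℝ, (∀ i j : Fin n, i ≤ j → w' j ≤ w' i) ∧
      (∀ S, χ S = true → 1 ≤ ∑ k ∈ S, w' k) ∧
      (∀ S, χ S = false → ∑ k ∈ S, w' k ≤ α) := by
  suffices h : ∀ (N : ℕ) (w : Fin n → ℝ), (invSet w).card ≤ N →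
      (∀ S, χ S = true → 1 ≤ ∑ k ∈ S, w k) →
      (∀ S, χ S = false → ∑ k ∈ S, w k ≤ α) →
      ∃ w' : Fin n → ℝ, (∀ i j : Fin n, i ≤ j → w' j ≤ w' i) ∧
        (∀ S, χ S = true → 1 ≤ ∑ k ∈ S, w' k) ∧
        (∀ S, χ S = false → ∑ k ∈ S, w' k ≤ α) by
    exact h _ w le_rfl h1 h2
  intro N
  induction N with
  | zero =>
    intro w hc hb1 hb2
    refine ⟨w, ?_, hb1, hb2⟩
    intro i j hij
    rcases eq_or_lt_of_le hij with rfl | hlt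
    · exact le_rfl
    by_contra hcon
    push_neg at hcon
    have : (i, j) ∈ invSet w := mem_invSet.2 ⟨hlt, hcon⟩
    have := Finset.card_pos.2 ⟨_, this⟩
    omega
  | succ N ih =>
    intro w hc hb1 hb2
    by_cases hex : ∃ i j : Fin n, i < j ∧ w i < w j
    · obtain ⟨i, j, hij, hwij⟩ := hex
      have hcard := inv_card_lt hij hwij
      obtain ⟨hb1', hb2'⟩ := swap_bounds (hsorted i j hij) (ne_of_lt hij) hb1 hb2 hwij.le
      exact ih (fun k => w (Equiv.swap i j k)) (by omega) hb1' hb2'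
    · push_neg at hex
      refine ⟨w, ?_, hb1, hb2⟩
      intro i j hij
      rcases eq_or_lt_of_le hij with rfl | hlt
      · exact le_rfl
      · exact hex i j hlt

lemma truncate {n : ℕ} {χ : Finset (Fin n) → Bool} {α : ℝ} (hχ : SimpleGame χ)
    (w : Fin n → ℝ) (hmono : ∀ i j : Fin n, i ≤ j → w j ≤ w i)
    (h1 : ∀ S, χ S = true → 1 ≤ ∑ k ∈ S, w k)
    (h2 : ∀ S, χ S = false → ∑ k ∈ S, w k ≤ α) :
    ∃ w' : Fin n → ℝ, (∀ i j : Fin n, i ≤ j → w' j ≤ w' i) ∧ (∀ i, 0 ≤ w' i) ∧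
      (∀ S, χ S = true → 1 ≤ ∑ k ∈ S, w' k) ∧
      (∀ S, χ S = false → ∑ k ∈ S, w' k ≤ α) := by
  classical
  refine ⟨fun i => max (w i) 0, fun i j hij => max_le_max (hmono i j hij) le_rfl,
    fun i => le_max_right _ _, ?_, ?_⟩
  · intro S hS
    calc (1 : ℝ) ≤ ∑ k ∈ S, w k := h1 S hS
      _ ≤ ∑ k ∈ S, max (w k) 0 := Finset.sum_le_sum (fun k _ => le_max_left _ _)
  · intro S hS
    have hsplit : ∑ k ∈ S, max (w k) 0 = ∑ k ∈ S.filter (fun i => 0 ≤ w i), w k := by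
      rw [← Finset.sum_filter_add_sum_filter_not S (fun i => 0 ≤ w i)]
      have e1 : ∑ k ∈ S.filter (fun i => 0 ≤ w i), max (w k) 0
          = ∑ k ∈ S.filter (fun i => 0 ≤ w i), w k :=
        Finset.sum_congr rfl (fun k hk => max_eq_left (Finset.mem_filter.1 hk).2)
      have e2 : ∑ k ∈ S.filter (fun i => ¬ 0 ≤ w i), max (w k) 0 = 0 :=
        Finset.sum_eq_zero (fun k hk =>
          max_eq_right (le_of_not_ge (Finset.mem_filter.1 hk).2))
      rw [e1, e2, add_zero]
    rw [hsplit]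
    refine h2 _ ?_
    cases hT : χ (S.filter (fun i => 0 ≤ w i)) with
    | false => rfl
    | true =>
      exfalso
      have := hχ.2.2 _ _ (Finset.filter_subset _ S) hT
      rw [this] at hS
      simp at hS


/-- an `α`-roughly weighted complete simple game (voters numbered with
decreasing desirability) admits an `α`-rough weighting with
`w 1 ≥ … ≥ w n ≥ 0` where equally desirable voters get equal weights. -/
theorem complete_simple_game_class_weights (n : ℕ) (χ : Finset (Fin n) → Bool)
    (hχ : SimpleGame χ)
    (hcomplete : ∀ i j : Fin n, Desirable χ i j ∨ Desirable χ j i)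
    (hsorted : ∀ i j : Fin n, i < j → Desirable χ i j)
    (α : ℝ) (hα : 1 ≤ α) (h : RoughlyWeighted χ α) :
    ∃ w : Fin n → ℝ, (∀ i j : Fin n, i ≤ j → w j ≤ w i) ∧ (∀ i : Fin n, 0 ≤ w i) ∧
      (∀ i j : Fin n, Desirable χ i j → Desirable χ j i → w i = w j) ∧
      (∀ S : Finset (Fin n), χ S = true → 1 ≤ ∑ i ∈ S, w i) ∧
      (∀ S : Finset (Fin n), χ S = false → ∑ i ∈ S, w i ≤ α) := by
  classical
  obtain ⟨w0, hw01, hw02⟩ := h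
  obtain ⟨w1, hm1, h11, h12⟩ := exists_sorted hsorted w0 hw01 hw02
  obtain ⟨w2, hm2, hnn2, h21, h22⟩ := truncate hχ w1 hm1 h11 h12
  set A : Finset (Equiv.Perm (Fin n)) := Finset.univ.filter
    (fun π => (∀ S : Finset (Fin n), χ (S.image π) = χ S) ∧
       ∀ k, Desirable χ (π k) k ∧ Desirable χ k (π k)) with hAdef
  have hmemA : ∀ π : Equiv.Perm (Fin n), π ∈ A ↔
      ((∀ S : Finset (Fin n), χ (S.image π) = χ S) ∧
       ∀ k, Desirable χ (π k) k ∧ Desirable χ k (π k)) := by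
    intro π; simp [hAdef]
  have hone : (1 : Equiv.Perm (Fin n)) ∈ A := by
    rw [hmemA]
    constructor
    · intro S; simp
    · intro k
      simp only [Equiv.Perm.one_apply]
      exact ⟨desirable_refl χ k, desirable_refl χ k⟩
  have hmul : ∀ π σ : Equiv.Perm (Fin n), π ∈ A → σ ∈ A → π * σ ∈ A := by
    intro π σ hπ hσ
    rw [hmemA] at hπ hσ ⊢
    constructor
    · intro S
      have himg : S.image ⇑(π * σ) = (S.image σ).image π := by
        rw [Equiv.Perm.coe_mul, Finset.image_image]
      rw [himg, hπ.1, hσ.1]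
    · intro k
      simp only [Equiv.Perm.mul_apply]
      exact ⟨desirable_trans (hπ.2 (σ k)).1 (hσ.2 k).1,
             desirable_trans (hσ.2 k).2 (hπ.2 (σ k)).2⟩
  have hswap : ∀ i j : Fin n, Desirable χ i j → Desirable χ j i → Equiv.swap i j ∈ A := by
    intro i j hij hji
    have hijne : ∀ (S : Finset (Fin n)), i ∈ S → j ∉ S → i ≠ j :=
      fun S hi hj hh => hj (hh ▸ hi)
    rw [hmemA]
    constructor
    · intro S
      by_cases hiS : i ∈ S <;> by_cases hjS : j ∈ S
      · rw [image_swap_both (by tauto)]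
      · rw [Equiv.swap_comm, image_swap_single hiS hjS]
        refine bool_eq_of_imp ?_ (hji S hiS hjS)
        intro hT
        have hiT : i ∉ insert j (S.erase i) := by
          simp only [Finset.mem_insert, Finset.mem_erase]
          rintro (hh | ⟨hh, _⟩)
          · exact hijne S hiS hjS hh
          · exact hh rfl
        have := hij _ (Finset.mem_insert_self _ _) hiT hT
        rwa [Finset.erase_insert (by simp [Finset.mem_erase, hjS]),
          Finset.insert_erase hiS] at this
      · rw [image_swap_single hjS hiS]
        refine bool_eq_of_imp ?_ (hij S hjS hiS)
        intro hT
        have hjT : j ∉ insert i (S.erase j) := by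
          simp only [Finset.mem_insert, Finset.mem_erase]
          rintro (hh | ⟨hh, _⟩)
          · exact hiS (hh ▸ hjS)
          · exact hh rfl
        have := hji _ (Finset.mem_insert_self _ _) hjT hT
        rwa [Finset.erase_insert (by simp [Finset.mem_erase, hiS]),
          Finset.insert_erase hjS] at this
      · rw [image_swap_both (by tauto)]
    · intro k
      rcases eq_or_ne k i with rfl | hki
      · rw [Equiv.swap_apply_left]; exact ⟨hji, hij⟩
      rcases eq_or_ne k j with rfl | hkj
      · rw [Equiv.swap_apply_right]; exact ⟨hij, hji⟩
      · rw [Equiv.swap_apply_of_ne_of_ne hki hkj]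
        exact ⟨desirable_refl χ k, desirable_refl χ k⟩
  have hAne : 0 < A.card := Finset.card_pos.2 ⟨1, hone⟩
  have hAcast : (0 : ℝ) < (A.card : ℝ) := by exact_mod_cast hAne
  have heqsum : ∀ i j : Fin n, Desirable χ i j → Desirable χ j i →
      (∑ π ∈ A, w2 (π i)) = ∑ π ∈ A, w2 (π j) := by
    intro i j hij hji
    have hτ : Equiv.swap i j ∈ A := hswap i j hij hji
    refine Finset.sum_equiv (Equiv.mulRight (Equiv.swap i j)) ?_ ?_
    · intro π
      constructor
      · intro hπ; exact hmul _ _ hπ hτ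
      · intro hπ
        simp only [Equiv.coe_mulRight] at hπ
        have := hmul _ _ hπ hτ
        rwa [mul_assoc, Equiv.swap_mul_self, mul_one] at this
    · intro π hπ
      simp only [Equiv.coe_mulRight, Equiv.Perm.mul_apply, Equiv.swap_apply_right]
  have hsum : ∀ S : Finset (Fin n),
      ∑ k ∈ S, (∑ π ∈ A, w2 (π k)) / (A.card : ℝ)
        = (∑ π ∈ A, ∑ x ∈ S.image π, w2 x) / (A.card : ℝ) := by
    intro S
    rw [← Finset.sum_div, Finset.sum_comm]
    congr 1
    refine Finset.sum_congr rfl (fun π _ => ?_)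
    exact (Finset.sum_image (fun x _ y _ hxy => π.injective hxy)).symm
  refine ⟨fun k => (∑ π ∈ A, w2 (π k)) / (A.card : ℝ), ?_, ?_, ?_, ?_, ?_⟩
  · -- monotone
    intro i j hij
    show (∑ π ∈ A, w2 (π j)) / (A.card : ℝ) ≤ (∑ π ∈ A, w2 (π i)) / (A.card : ℝ)
    rcases eq_or_lt_of_le hij with rfl | hlt
    · exact le_rfl
    have hsums : ∑ π ∈ A, w2 (π j) ≤ ∑ π ∈ A, w2 (π i) := by
      by_cases hd : Desirable χ j i
      · exact le_of_eq (heqsum i j (hsorted i j hlt) hd).symm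
      · refine Finset.sum_le_sum (fun π hπ => ?_)
        rw [hmemA] at hπ
        have hlt2 : π i < π j := by
          by_contra hcon
          push_neg at hcon
          have hne : π j ≠ π i := fun hh => (ne_of_lt hlt) (π.injective hh).symm
          have h5 : Desirable χ (π j) (π i) := hsorted _ _ (lt_of_le_of_ne hcon hne)
          exact hd (desirable_trans (desirable_trans (hπ.2 j).2 h5) (hπ.2 i).1)
        exact hm2 _ _ hlt2.le
    exact div_le_div_of_nonneg_right hsums hAcast.le
  · -- nonneg
    intro k
    exact div_nonneg (Finset.sum_nonneg fun π _ => hnn2 _) hAcast.le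
  · -- class equality
    intro i j hij hji
    show (∑ π ∈ A, w2 (π i)) / (A.card : ℝ) = (∑ π ∈ A, w2 (π j)) / (A.card : ℝ)
    rw [heqsum i j hij hji]
  · -- winning
    intro S hS
    show (1 : ℝ) ≤ ∑ k ∈ S, (∑ π ∈ A, w2 (π k)) / (A.card : ℝ)
    rw [hsum S, le_div_iff₀ hAcast, one_mul]
    have hbound : ∀ π ∈ A, (1 : ℝ) ≤ ∑ x ∈ S.image π, w2 x := by
      intro π hπ
      rw [hmemA] at hπ
      refine h21 _ ?_
      rw [hπ.1 S]; exact hS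
    calc ((A.card : ℝ)) = A.card • (1 : ℝ) := by simp
      _ ≤ ∑ π ∈ A, ∑ x ∈ S.image π, w2 x := Finset.card_nsmul_le_sum A _ 1 hbound
  · -- losing
    intro S hS
    show ∑ k ∈ S, (∑ π ∈ A, w2 (π k)) / (A.card : ℝ) ≤ α
    rw [hsum S, div_le_iff₀ hAcast]
    have hbound : ∀ π ∈ A, ∑ x ∈ S.image π, w2 x ≤ α := by
      intro π hπ
      rw [hmemA] at hπ
      refine h22 _ ?_
      rw [hπ.1 S]; exact hS
    calc ∑ π ∈ A, ∑ x ∈ S.image π, w2 x ≤ A.card • α :=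
          Finset.sum_le_card_nsmul A _ α hbound
      _ = α * A.card := by rw [nsmul_eq_mul, mul_comm]
end

section
/- Let f : 2^N → {0,1} satisfy f(∅) = 0 and f(N) = 1, where N = {1,…,n}. Then μ(f) ≤ 1 + CoS(f). Concretely: if Δ ≥ 0 and p_1,…,p_n ≥ 0 satisfy ∑_{i∈N} p_i = 1 + Δ and ∑_{i∈S} p_i ≥ f(S) for all S ⊆ N, then f is (1+Δ)-roughly weighted. -/
open Finset

/-- The cost of stability `CoS(f)`: the minimum external payment `Δ ≥ 0` admitting
a stabilizing payoff vector. -/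
noncomputable def CoS {n : ℕ} (f : Finset (Fin n) → Bool) : ℝ :=
  sInf {Δ : ℝ | 0 ≤ Δ ∧ ∃ p : Fin n → ℝ, (∀ i : Fin n, 0 ≤ p i) ∧
    (∑ i : Fin n, p i) = 1 + Δ ∧
    ∀ S : Finset (Fin n), (if f S = true then (1 : ℝ) else 0) ≤ ∑ i ∈ S, p i}

/-- `μ(f) ≤ 1 + CoS(f)`; concretely, any feasible payoff vector with
external payment `Δ` witnesses that `f` is `(1+Δ)`-roughly weighted. -/
theorem critical_threshold_le_one_add_cost_of_stability (n : ℕ)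
    (f : Finset (Fin n) → Bool) (hf0 : f ∅ = false) (hfN : f Finset.univ = true) :
    mu f ≤ 1 + CoS f ∧
    ∀ (Δ : ℝ) (p : Fin n → ℝ), 0 ≤ Δ → (∀ i : Fin n, 0 ≤ p i) →
      (∑ i : Fin n, p i) = 1 + Δ →
      (∀ S : Finset (Fin n), (if f S = true then (1 : ℝ) else 0) ≤ ∑ i ∈ S, p i) →
      RoughlyWeighted f (1 + Δ) := by
  have hn : 1 ≤ n := by
    by_contra h
    push_neg at h
    interval_cases n
    have : (Finset.univ : Finset (Fin 0)) = ∅ := rfl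
    rw [this, hf0] at hfN
    simp at hfN
  have key : ∀ (Δ : ℝ) (p : Fin n → ℝ), 0 ≤ Δ → (∀ i : Fin n, 0 ≤ p i) →
      (∑ i : Fin n, p i) = 1 + Δ →
      (∀ S : Finset (Fin n), (if f S = true then (1 : ℝ) else 0) ≤ ∑ i ∈ S, p i) →
      RoughlyWeighted f (1 + Δ) := by
    intro Δ p hΔ hp hsum hstab
    refine ⟨p, ?_, ?_⟩
    · intro S hS
      have := hstab S
      simpa [hS] using this
    · intro S _
      calc ∑ i ∈ S, p i ≤ ∑ i : Fin n, p i :=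
            Finset.sum_le_sum_of_subset_of_nonneg (Finset.subset_univ S)
              (fun i _ _ => hp i)
        _ = 1 + Δ := hsum
  refine ⟨?_, key⟩
  -- Show mu f ≤ 1 + CoS f
  set D := {Δ : ℝ | 0 ≤ Δ ∧ ∃ p : Fin n → ℝ, (∀ i : Fin n, 0 ≤ p i) ∧
    (∑ i : Fin n, p i) = 1 + Δ ∧
    ∀ S : Finset (Fin n), (if f S = true then (1 : ℝ) else 0) ≤ ∑ i ∈ S, p i} with hD
  have hDne : D.Nonempty := by
    refine ⟨(n : ℝ) - 1, ?_, fun _ => 1, fun _ => zero_le_one, ?_, ?_⟩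
    · have : (1 : ℝ) ≤ n := by exact_mod_cast hn
      linarith
    · simp
    · intro S
      by_cases hS : f S = true
      · simp only [hS, if_pos rfl]
        have hSne : S.Nonempty := by
          rcases S.eq_empty_or_nonempty with rfl | h
          · rw [hf0] at hS; simp at hS
          · exact h
        have : (1 : ℝ) ≤ (S.card : ℝ) := by
          exact_mod_cast Finset.card_pos.mpr hSne
        simpa using this
      · simp only [hS, if_false]
        simp
  have hmu_le : ∀ Δ ∈ D, mu f ≤ 1 + Δ := by
    intro Δ hΔ
    obtain ⟨hΔ0, p, hp, hsum, hstab⟩ := hΔ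
    have hRW := key Δ p hΔ0 hp hsum hstab
    apply csInf_le
    · exact ⟨1, fun α hα => hα.1⟩
    · exact ⟨by linarith, hRW⟩
  have : mu f - 1 ≤ sInf D := by
    apply le_csInf hDne
    intro Δ hΔ
    linarith [hmu_le Δ hΔ]
  have hCoS : CoS f = sInf D := rfl
  rw [hCoS]
  linarith
end

section
/- Let χ be a simple game on n voters, let W' be a set of winning coalitions of χ and L' a set of losing coalitions of χ, and suppose there are non-negative reals (u_S)_{S∈W'} and (v_T)_{T∈L'} satisfying ∑_{S∈W', i∈S} u_S − ∑_{T∈L', i∈T} v_T ≤ 0 for every voter i ∈ N and ∑_{T∈L'} v_T ≤ 1. Then for every real α ≥ 1 such that χ is α-roughly weighted, one has α ≥ ∑_{S∈W'} u_S; in particular μ(χ) ≥ ∑_{S∈W'} u_S. -/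
open Finset

/-- a feasible dual solution `(u, v)` on subsets `W'` of winning and
`L'` of losing coalitions certifies the lower bound `∑_{S ∈ W'} u S ≤ μ(χ)`. -/
theorem dual_certificate_lower_bound (n : ℕ) (χ : Finset (Fin n) → Bool)
    (hχ : SimpleGame χ) (W' L' : Finset (Finset (Fin n)))
    (hW : ∀ S ∈ W', χ S = true) (hL : ∀ T ∈ L', χ T = false)
    (u v : Finset (Fin n) → ℝ)
    (hu : ∀ S ∈ W', 0 ≤ u S) (hv : ∀ T ∈ L', 0 ≤ v T)
    (hdual : ∀ i : Fin n,
      (∑ S ∈ W'.filter (fun S => i ∈ S), u S) -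
        (∑ T ∈ L'.filter (fun T => i ∈ T), v T) ≤ 0)
    (hvsum : ∑ T ∈ L', v T ≤ 1) :
    (∀ α : ℝ, 1 ≤ α → RoughlyWeighted χ α → ∑ S ∈ W', u S ≤ α) ∧
    ∑ S ∈ W', u S ≤ mu χ := by
  obtain ⟨hempty, hfull, hmono⟩ := hχ
  have main : ∀ α : ℝ, 1 ≤ α → RoughlyWeighted χ α → ∑ S ∈ W', u S ≤ α := by
    intro α hα ⟨w, hwin, hlose⟩
    -- replace w by its nonnegative part
    set w' : Fin n → ℝ := fun i => max (w i) 0 with hw'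
    have hw'nonneg : ∀ i, 0 ≤ w' i := fun i => le_max_right _ _
    have hwin' : ∀ S, χ S = true → 1 ≤ ∑ i ∈ S, w' i := by
      intro S hS
      exact le_trans (hwin S hS) (Finset.sum_le_sum fun i _ => le_max_left _ _)
    have hlose' : ∀ T, χ T = false → ∑ i ∈ T, w' i ≤ α := by
      intro T hT
      have hsplit : ∑ i ∈ T, w' i = ∑ i ∈ T.filter (fun i => 0 < w i), w i := by
        rw [Finset.sum_filter]
        apply Finset.sum_congr rfl
        intro i _
        by_cases h : 0 < w i
        · simp [hw', h, max_eq_left h.le]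
        · simp [hw', h, max_eq_right (le_of_not_gt h)]
      have hsub : T.filter (fun i => 0 < w i) ⊆ T := Finset.filter_subset _ _
      have hTsub : χ (T.filter (fun i => 0 < w i)) = false := by
        by_contra h
        have : χ (T.filter (fun i => 0 < w i)) = true := by
          cases hh : χ (T.filter (fun i => 0 < w i)) <;> simp_all
        exact absurd (hmono _ _ hsub this) (by simp [hT])
      rw [hsplit]
      exact hlose _ hTsub
    -- chain of inequalities
    have step1 : ∑ S ∈ W', u S ≤ ∑ S ∈ W', u S * ∑ i ∈ S, w' i := by
      apply Finset.sum_le_sum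
      intro S hS
      calc u S = u S * 1 := (mul_one _).symm
        _ ≤ u S * ∑ i ∈ S, w' i :=
          mul_le_mul_of_nonneg_left (hwin' S (hW S hS)) (hu S hS)
    have swapW : ∑ S ∈ W', u S * ∑ i ∈ S, w' i
        = ∑ i : Fin n, (∑ S ∈ W'.filter (fun S => i ∈ S), u S) * w' i := by
      simp_rw [Finset.mul_sum, Finset.sum_mul]
      exact Finset.sum_comm' (fun S i => by simp)
    have swapL : ∑ T ∈ L', v T * ∑ i ∈ T, w' i
        = ∑ i : Fin n, (∑ T ∈ L'.filter (fun T => i ∈ T), v T) * w' i := by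
      simp_rw [Finset.mul_sum, Finset.sum_mul]
      exact Finset.sum_comm' (fun T i => by simp)
    have step2 : ∑ i : Fin n, (∑ S ∈ W'.filter (fun S => i ∈ S), u S) * w' i
        ≤ ∑ i : Fin n, (∑ T ∈ L'.filter (fun T => i ∈ T), v T) * w' i := by
      apply Finset.sum_le_sum
      intro i _
      exact mul_le_mul_of_nonneg_right (by linarith [hdual i]) (hw'nonneg i)
    have step3 : ∑ T ∈ L', v T * ∑ i ∈ T, w' i ≤ α := by
      calc ∑ T ∈ L', v T * ∑ i ∈ T, w' i
          ≤ ∑ T ∈ L', v T * α := by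
            apply Finset.sum_le_sum
            intro T hT
            exact mul_le_mul_of_nonneg_left (hlose' T (hL T hT)) (hv T hT)
        _ = (∑ T ∈ L', v T) * α := (Finset.sum_mul _ _ _).symm
        _ ≤ 1 * α := mul_le_mul_of_nonneg_right hvsum (by linarith)
        _ = α := one_mul _
    linarith [step1, step2, step3, swapW.le, swapL.ge]
  refine ⟨main, ?_⟩
  have hne : {α : ℝ | 1 ≤ α ∧ RoughlyWeighted χ α}.Nonempty := by
    refine ⟨max (n : ℝ) 1, le_max_right _ _, fun i => 1, ?_, ?_⟩
    · intro S hS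
      have hSne : S.Nonempty := by
        rcases S.eq_empty_or_nonempty with h | h
        · rw [h, hempty] at hS; exact absurd hS (by simp)
        · exact h
      have : (1 : ℝ) ≤ (S.card : ℝ) := by
        exact_mod_cast Nat.one_le_iff_ne_zero.mpr (Finset.card_ne_zero_of_mem hSne.choose_spec)
      simpa using this
    · intro S _
      have h1 : (S.card : ℝ) ≤ (n : ℝ) := by
        exact_mod_cast (Finset.card_le_card (Finset.subset_univ S)).trans_eq (by simp)
      simp only [Finset.sum_const, nsmul_eq_mul, mul_one]
      exact h1.trans (le_max_left _ _)
  exact le_csInf hne fun α ⟨h1, h2⟩ => main α h1 h2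
end

section
/- For every integer n ≥ 4 there exists a simple game χ on n voters with μ(χ) ≥ ⌊n²/4⌋ / n; that is, χ is not α-roughly weighted for any real α with 1 ≤ α < ⌊n²/4⌋ / n. -/
open Finset

theorem keyarith (n k : ℕ) (h : k = n/2) : k * (n - k) = n^2/4 := by
  obtain ⟨m, hm⟩ := Nat.even_or_odd' n
  subst h
  rcases hm with hm | hm <;> subst hm
  · have h1 : (2*m)^2 = 4*(m*m) := by ring
    have h2 : 2*m/2 = m := by omega
    have h3 : 2*m - m = m := by omega
    rw [h1, h2, h3, Nat.mul_div_cancel_left _ (by norm_num)]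
  · have h1 : (2*m+1)^2 = 4*(m*m+m)+1 := by ring
    have h2 : (2*m+1)/2 = m := by omega
    have h3 : 2*m+1 - m = m+1 := by omega
    rw [h1, h2, h3, Nat.mul_add_div (by norm_num : 0<4)]
    norm_num [Nat.mul_succ]

/-- for every `n ≥ 4` there is a simple game on `n` voters whose
critical threshold value is at least `⌊n²/4⌋ / n`. -/
theorem exists_simple_game_large_critical_threshold (n : ℕ) (hn : 4 ≤ n) :
    ∃ χ : Finset (Fin n) → Bool, SimpleGame χ ∧
      ((n ^ 2 / 4 : ℕ) : ℝ) / (n : ℝ) ≤ mu χ ∧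
      ∀ α : ℝ, 1 ≤ α → α < ((n ^ 2 / 4 : ℕ) : ℝ) / (n : ℝ) →
        ¬ RoughlyWeighted χ α := by
  set k := n / 2 with hk
  have hk2 : 2 ≤ k := by omega
  have hkn : k < n := by omega
  set χ : Finset (Fin n) → Bool :=
    fun S => decide ((∃ i ∈ S, (i:ℕ) < k) ∧ (∃ i ∈ S, ¬ (i:ℕ) < k)) with hχ
  have hχt : ∀ S, χ S = true ↔ ((∃ i ∈ S, (i:ℕ) < k) ∧ (∃ i ∈ S, ¬ (i:ℕ) < k)) := by
    intro S; simp [hχ]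
  have hχf : ∀ S, χ S = false ↔ ¬((∃ i ∈ S, (i:ℕ) < k) ∧ (∃ i ∈ S, ¬ (i:ℕ) < k)) := by
    intro S; simp [hχ]
  set A : Finset (Fin n) := univ.filter (fun i => (i:ℕ) < k) with hA
  set B : Finset (Fin n) := univ.filter (fun i => ¬ (i:ℕ) < k) with hB
  have hmemA : ∀ i : Fin n, i ∈ A ↔ (i:ℕ) < k := by intro i; simp [hA]
  have hmemB : ∀ i : Fin n, i ∈ B ↔ ¬ (i:ℕ) < k := by intro i; simp [hB]
  have cardA : A.card = k := by
    have : A = Iio (⟨k, hkn⟩ : Fin n) := by ext i; simp [hA, Fin.lt_def]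
    rw [this, Fin.card_Iio]
  have cardB : B.card = n - k := by
    have hBc : B = Aᶜ := by ext i; simp [hA, hB]
    rw [hBc, Finset.card_compl, cardA, Fintype.card_fin]
  have hcards : (A.card * B.card : ℕ) = n^2/4 := by
    rw [cardA, cardB]; exact keyarith n k hk
  have hn0 : (0:ℝ) < n := by positivity
  -- the key inequality
  have key : ∀ α : ℝ, RoughlyWeighted χ α → ((n^2/4 : ℕ) : ℝ) ≤ n * α := by
    rintro α ⟨w, hw1, hw2⟩
    have hA2 : ∑ i ∈ A, w i ≤ α := by
      refine hw2 A ((hχf A).mpr ?_)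
      rintro ⟨-, j, hj, hj2⟩
      exact hj2 ((hmemA j).mp hj)
    have hB2 : ∑ i ∈ B, w i ≤ α := by
      refine hw2 B ((hχf B).mpr ?_)
      rintro ⟨⟨j, hj, hj2⟩, -⟩
      exact ((hmemB j).mp hj) hj2
    have hpair : ∀ a ∈ A, ∀ b ∈ B, (1:ℝ) ≤ w a + w b := by
      intro a ha b hb
      have ha' := (hmemA a).mp ha
      have hb' := (hmemB b).mp hb
      have hab : a ≠ b := by
        intro h; rw [h] at ha'; exact hb' ha'
      have := hw1 {a, b} ((hχt _).mpr
        ⟨⟨a, by simp, ha'⟩, ⟨b, by simp, hb'⟩⟩)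
      rwa [Finset.sum_pair hab] at this
    have hsum : ((A.card * B.card : ℕ) : ℝ) ≤ ∑ a ∈ A, ∑ b ∈ B, (w a + w b) := by
      have h0 : ((A.card * B.card : ℕ) : ℝ) = ∑ a ∈ A, ∑ b ∈ B, (1:ℝ) := by
        simp [Finset.sum_const, nsmul_eq_mul]
      rw [h0]
      refine Finset.sum_le_sum fun a ha => Finset.sum_le_sum fun b hb => hpair a ha b hb
    have hsum2 : ∑ a ∈ A, ∑ b ∈ B, (w a + w b)
        = (B.card : ℝ) * (∑ a ∈ A, w a) + (A.card : ℝ) * (∑ b ∈ B, w b) := by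
      simp only [Finset.sum_add_distrib, Finset.sum_const, nsmul_eq_mul, Finset.mul_sum]
    have h1 : (B.card : ℝ) * (∑ a ∈ A, w a) ≤ (B.card : ℝ) * α :=
      mul_le_mul_of_nonneg_left hA2 (Nat.cast_nonneg _)
    have h2 : (A.card : ℝ) * (∑ b ∈ B, w b) ≤ (A.card : ℝ) * α :=
      mul_le_mul_of_nonneg_left hB2 (Nat.cast_nonneg _)
    have hcardn : (A.card : ℝ) + (B.card : ℝ) = n := by
      rw [cardA, cardB]; push_cast [Nat.cast_sub hkn.le]; ring
    calc ((n^2/4 : ℕ) : ℝ) = ((A.card * B.card : ℕ) : ℝ) := by rw [hcards]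
      _ ≤ ∑ a ∈ A, ∑ b ∈ B, (w a + w b) := hsum
      _ = (B.card : ℝ) * (∑ a ∈ A, w a) + (A.card : ℝ) * (∑ b ∈ B, w b) := hsum2
      _ ≤ (B.card : ℝ) * α + (A.card : ℝ) * α := add_le_add h1 h2
      _ = ((A.card : ℝ) + (B.card : ℝ)) * α := by ring
      _ = n * α := by rw [hcardn]
  have keydiv : ∀ α : ℝ, RoughlyWeighted χ α → ((n^2/4 : ℕ) : ℝ) / n ≤ α := by
    intro α hα
    rw [div_le_iff₀ hn0]
    linarith [key α hα]
  refine ⟨χ, ⟨?_, ?_, ?_⟩, ?_, ?_⟩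
  · simp [hχ]
  · rw [hχt]
    exact ⟨⟨⟨0, by omega⟩, mem_univ _, by simpa using by omega⟩,
      ⟨⟨k, hkn⟩, mem_univ _, by simp⟩⟩
  · intro S T hST hS
    rw [hχt] at hS ⊢
    obtain ⟨⟨a, ha, ha2⟩, ⟨b, hb, hb2⟩⟩ := hS
    exact ⟨⟨a, hST ha, ha2⟩, ⟨b, hST hb, hb2⟩⟩
  · -- mu lower bound
    have hne : ((n : ℝ)) ∈ {α : ℝ | 1 ≤ α ∧ RoughlyWeighted χ α} := by
      refine ⟨by exact_mod_cast by omega, fun _ => 1, ?_, ?_⟩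
      · intro S hS
        obtain ⟨⟨a, ha, -⟩, -⟩ := (hχt S).mp hS
        have : 1 ≤ S.card := Finset.card_pos.mpr ⟨a, ha⟩
        simp only [Finset.sum_const, nsmul_eq_mul, mul_one]
        exact_mod_cast this
      · intro S _
        simp only [Finset.sum_const, nsmul_eq_mul, mul_one]
        exact_mod_cast Finset.card_le_card (Finset.subset_univ S) |>.trans
          (le_of_eq (Finset.card_univ.trans (Fintype.card_fin n)))
    exact le_csInf ⟨_, hne⟩ fun b hb => keydiv b hb.2
  · intro α hα1 hα2 hRW
    exact absurd (keydiv α hRW) (not_le.mpr hα2)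
end

section
/- Let χ be a simple game on n voters that has a losing coalition of cardinality k. Then μ(χ) ≤ n − k; that is, χ is (n−k)-roughly weighted. -/
open Finset

/-- a simple game having a losing coalition of cardinality `k` is
`(n - k)`-roughly weighted, so `μ(χ) ≤ n - k`. -/
theorem critical_threshold_le_of_losing_coalition (n k : ℕ)
    (χ : Finset (Fin n) → Bool) (hχ : SimpleGame χ)
    (S : Finset (Fin n)) (hS : χ S = false) (hcard : S.card = k) :
    mu χ ≤ (n : ℝ) - (k : ℝ) ∧ RoughlyWeighted χ ((n : ℝ) - (k : ℝ)) := by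
  obtain ⟨h0, huniv, hmono⟩ := hχ
  set w : Fin n → ℝ := fun i => if i ∈ S then 0 else 1 with hw
  have hsum : ∀ T : Finset (Fin n), ∑ i ∈ T, w i = ((T \ S).card : ℝ) := by
    intro T
    have : ∑ i ∈ T, w i = ∑ i ∈ T, (if i ∉ S then (1:ℝ) else 0) := by
      apply Finset.sum_congr rfl
      intro i _
      by_cases h : i ∈ S <;> simp [hw, h]
    rw [this, Finset.sum_boole]
    congr 1
    rw [Finset.sdiff_eq_filter]
  have hrw : RoughlyWeighted χ ((n : ℝ) - (k : ℝ)) := by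
    refine ⟨w, ?_, ?_⟩
    · intro T hT
      rw [hsum]
      have hne : (T \ S).Nonempty := by
        rw [Finset.sdiff_nonempty]
        intro hsub
        exact absurd (hmono T S hsub hT) (by simp [hS])
      have := Finset.card_pos.mpr hne
      exact_mod_cast this
    · intro T _
      rw [hsum]
      have h1 : (T \ S).card ≤ Sᶜ.card := by
        apply Finset.card_le_card
        intro x hx
        simp only [Finset.mem_sdiff] at hx
        simp [hx.2]
      have h2 : (Sᶜ.card : ℕ) = n - k := by
        rw [Finset.card_compl, hcard, Fintype.card_fin]
      have hkn : k ≤ n := by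
        have := Finset.card_le_univ S
        simp [hcard] at this
        exact this
      have : ((T \ S).card : ℝ) ≤ ((n - k : ℕ) : ℝ) := by
        exact_mod_cast h2 ▸ h1
      calc ((T \ S).card : ℝ) ≤ ((n - k : ℕ) : ℝ) := this
        _ = (n : ℝ) - (k : ℝ) := by push_cast [hkn]; ring
  have hkn' : k < n := by
    have hle : k ≤ n := by
      have := Finset.card_le_univ S
      simp [hcard] at this
      exact this
    rcases eq_or_lt_of_le hle with h | h
    · exfalso
      have : S = Finset.univ := Finset.eq_univ_of_card S (by rw [hcard, h, Fintype.card_fin])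
      rw [this] at hS
      simp [huniv] at hS
    · exact h
  have h1le : (1:ℝ) ≤ (n : ℝ) - (k : ℝ) := by
    have : (k:ℝ) + 1 ≤ n := by exact_mod_cast hkn'
    linarith
  refine ⟨?_, hrw⟩
  apply csInf_le
  · exact ⟨1, fun x hx => hx.1⟩
  · exact ⟨h1le, hrw⟩
end

section
/- Let χ be a simple game on n voters in which every losing coalition has cardinality at most k. Then μ(χ) ≤ max(1, k/2); that is, χ is max(1, k/2)-roughly weighted. -/
open Finset

/-- if every losing coalition of a simple game has cardinality at
most `k`, then the game is `max(1, k/2)`-roughly weighted, so `μ(χ) ≤ max(1, k/2)`. -/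
theorem critical_threshold_le_max_one_half_k (n k : ℕ)
    (χ : Finset (Fin n) → Bool) (hχ : SimpleGame χ)
    (hlose : ∀ S : Finset (Fin n), χ S = false → S.card ≤ k) :
    mu χ ≤ max 1 ((k : ℝ) / 2) ∧ RoughlyWeighted χ (max 1 ((k : ℝ) / 2)) := by

  obtain ⟨hempty, huniv, hmono⟩ := hχ
  set α : ℝ := max 1 ((k : ℝ) / 2) with hα
  have hα1 : (1:ℝ) ≤ α := le_max_left _ _
  -- the weight function
  set w : Fin n → ℝ := fun i => if χ {i} = true then 1 else 1/2 with hw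
  have hwpos : ∀ i, (1/2 : ℝ) ≤ w i := by
    intro i; simp only [hw]; split <;> norm_num
  have hwin : ∀ S : Finset (Fin n), χ S = true → 1 ≤ ∑ i ∈ S, w i := by
    intro S hS
    by_cases hpass : ∃ i ∈ S, χ {i} = true
    · obtain ⟨i, hiS, hi⟩ := hpass
      have h1 : w i = 1 := by simp [hw, hi]
      calc (1:ℝ) = w i := h1.symm
        _ ≤ ∑ j ∈ S, w j := Finset.single_le_sum (fun j _ => le_trans (by norm_num) (hwpos j)) hiS
    · have h2 : 2 ≤ S.card := by
        by_contra h
        interval_cases h' : S.card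
        · have : S = ∅ := Finset.card_eq_zero.mp h'
          rw [this, hempty] at hS; exact Bool.false_ne_true hS
        · obtain ⟨i, hi⟩ := Finset.card_eq_one.mp h'
          exact hpass ⟨i, by simp [hi], by rwa [hi] at hS⟩
      calc (1:ℝ) = 2 * (1/2) := by norm_num
        _ ≤ (S.card : ℝ) * (1/2) := by
            apply mul_le_mul_of_nonneg_right _ (by norm_num)
            exact_mod_cast h2
        _ = ∑ _i ∈ S, (1/2 : ℝ) := by rw [Finset.sum_const, nsmul_eq_mul]
        _ ≤ ∑ i ∈ S, w i := Finset.sum_le_sum (fun i _ => hwpos i)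
  have hlos : ∀ S : Finset (Fin n), χ S = false → ∑ i ∈ S, w i ≤ α := by
    intro S hS
    have hno : ∀ i ∈ S, w i = 1/2 := by
      intro i hi
      have : χ {i} = false := by
        by_contra h
        have := hmono {i} S (Finset.singleton_subset_iff.mpr hi)
          (by simpa using h)
        rw [hS] at this; exact Bool.false_ne_true this
      simp [hw, this]
    calc ∑ i ∈ S, w i = (S.card : ℝ) * (1/2) := by
          rw [Finset.sum_congr rfl hno, Finset.sum_const, nsmul_eq_mul]
      _ ≤ (k : ℝ) * (1/2) := by
          apply mul_le_mul_of_nonneg_right _ (by norm_num)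
          exact_mod_cast hlose S hS
      _ = (k : ℝ) / 2 := by ring
      _ ≤ α := le_max_right _ _
  have hRW : RoughlyWeighted χ α := ⟨w, hwin, hlos⟩
  refine ⟨?_, hRW⟩
  apply csInf_le
  · exact ⟨1, fun x hx => hx.1⟩
  · exact ⟨hα1, hRW⟩
end

section
/- For every integer n ≥ 3, every simple game χ on n voters satisfies μ(χ) ≤ n/3; that is, every simple game on n voters is (n/3)-roughly weighted. -/
open Finset

/-- every simple game on `n ≥ 3` voters is `(n/3)`-roughly weighted,
i.e. `c_S(n) ≤ n/3`. -/
theorem critical_threshold_le_third (n : ℕ) (hn : 3 ≤ n)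
    (χ : Finset (Fin n) → Bool) (hχ : SimpleGame χ) :
    mu χ ≤ (n : ℝ) / 3 ∧ RoughlyWeighted χ ((n : ℝ) / 3) := by
  classical
  obtain ⟨hempty, huniv, hmono⟩ := hχ
  have h1n3 : (1 : ℝ) ≤ (n : ℝ) / 3 := by
    have : (3 : ℝ) ≤ (n : ℝ) := by exact_mod_cast hn
    linarith
  -- pick a maximum-cardinality losing set L
  obtain ⟨L, hLlose, hLmax⟩ :
      ∃ L : Finset (Fin n), χ L = false ∧ ∀ S, χ S = false → S.card ≤ L.card := by
    obtain ⟨L, hL1, hL2⟩ := Finset.exists_max_image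
      ((Finset.univ : Finset (Finset (Fin n))).filter (fun S => χ S = false))
      Finset.card ⟨∅, by simp [hempty]⟩
    exact ⟨L, (Finset.mem_filter.mp hL1).2, fun S hS => hL2 S (by simp [hS])⟩
  have hLcard : (L.card : ℝ) ≤ n := by
    exact_mod_cast (Finset.card_le_card (Finset.subset_univ L)).trans_eq
      (by simp)
  have key : RoughlyWeighted χ ((n : ℝ) / 3) := by
    by_cases hM : (2 * n : ℝ) ≤ 3 * L.card
    · -- Case A: L is big; weights = indicator of Lᶜ
      refine ⟨fun i => if i ∈ L then 0 else 1, ?_, ?_⟩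
      · intro S hS
        -- S is winning, so S ⊄ L, pick i ∈ S \ L
        have hnsub : ¬ S ⊆ L := fun h => by simp [hmono S L h hS] at hLlose
        obtain ⟨i, hiS, hiL⟩ := Finset.not_subset.mp hnsub
        have := Finset.single_le_sum
          (f := fun j => if j ∈ L then (0:ℝ) else 1)
          (fun j _ => by by_cases h : j ∈ L <;> simp [h]) hiS
        simpa [hiL] using this
      · intro S hS
        have heq : (∑ i ∈ S, if i ∈ L then (0:ℝ) else 1) = ((S \ L).card : ℝ) := by
          calc (∑ i ∈ S, if i ∈ L then (0:ℝ) else 1)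
              = ∑ i ∈ S.filter (fun i => ¬ i ∈ L), 1 := by
                rw [Finset.sum_filter]
                exact Finset.sum_congr rfl (fun i _ => by by_cases h : i ∈ L <;> simp [h])
            _ = ((S \ L).card : ℝ) := by
                rw [Finset.sum_const, ← Finset.sdiff_eq_filter]
                simp
        rw [heq]
        have hsub : (S \ L).card ≤ n - L.card := by
          have : S \ L ⊆ Finset.univ \ L := Finset.sdiff_subset_sdiff
            (Finset.subset_univ S) (le_refl L)
          have := Finset.card_le_card this
          simpa [Finset.card_sdiff_of_subset (Finset.subset_univ L)] using this
        have h1 : ((S \ L).card : ℝ) ≤ (n : ℝ) - L.card := by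
          have := (Nat.cast_le (α := ℝ)).mpr hsub
          rw [Nat.cast_sub (by exact_mod_cast hLcard)] at this
          simpa using this
        linarith
    · -- Case B: L is small; passers get weight 1, others 1/2
      push_neg at hM
      refine ⟨fun i => if χ {i} = true then 1 else 1/2, ?_, ?_⟩
      · intro S hS
        by_cases hp : ∃ i ∈ S, χ {i} = true
        · obtain ⟨i, hiS, hi⟩ := hp
          have := Finset.single_le_sum
            (f := fun j => if χ {j} = true then (1:ℝ) else 1/2)
            (fun j _ => by by_cases h : χ {j} = true <;> simp [h]) hiS
          simpa [hi] using this
        · push_neg at hp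
          have hsum : (∑ i ∈ S, if χ {i} = true then (1:ℝ) else 1/2)
              = (S.card : ℝ) / 2 := by
            calc (∑ i ∈ S, if χ {i} = true then (1:ℝ) else 1/2)
                = ∑ _i ∈ S, (1:ℝ)/2 :=
                  Finset.sum_congr rfl (fun i hi => by simp [hp i hi])
              _ = (S.card : ℝ) / 2 := by
                  rw [Finset.sum_const, nsmul_eq_mul]; ring
          rw [hsum]
          have hcard : 2 ≤ S.card := by
            rcases Finset.eq_empty_or_nonempty S with h | ⟨i, hiS⟩
            · subst h; simp [hempty] at hS
            · by_contra hlt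
              push_neg at hlt
              interval_cases h : S.card
              · simp [Finset.card_eq_zero.mp h, hempty] at hS
              · obtain ⟨j, hj⟩ := Finset.card_eq_one.mp h
                rw [hj] at hS
                have := hp i hiS
                rw [hj] at hiS
                simp at hiS
                subst hiS
                simp [hS] at this
          have : (2 : ℝ) ≤ (S.card : ℝ) := by exact_mod_cast hcard
          linarith
      · intro S hS
        have hp : ∀ i ∈ S, χ {i} = false := by
          intro i hi
          rcases Bool.eq_false_or_eq_true (χ {i}) with h | h
          · exact absurd (hmono {i} S (Finset.singleton_subset_iff.mpr hi) h)
              (by simp [hS])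
          · exact h
        have hsum : (∑ i ∈ S, if χ {i} = true then (1:ℝ) else 1/2)
            = (S.card : ℝ) / 2 := by
          calc (∑ i ∈ S, if χ {i} = true then (1:ℝ) else 1/2)
              = ∑ _i ∈ S, (1:ℝ)/2 :=
                Finset.sum_congr rfl (fun i hi => by simp [hp i hi])
            _ = (S.card : ℝ) / 2 := by
                rw [Finset.sum_const, nsmul_eq_mul]; ring
        rw [hsum]
        have hcard : (S.card : ℝ) ≤ (L.card : ℝ) := by
          exact_mod_cast hLmax S hS
        linarith
  refine ⟨?_, key⟩
  exact csInf_le ⟨1, fun a ha => ha.1⟩ ⟨h1n3, key⟩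
end

section
/- Let n ≥ 2 and let χ be a simple game on n voters that has a winning coalition of cardinality one. Then μ(χ) ≤ c_S(n−1), where c_S(m) denotes the maximum of μ(χ') over all simple games χ' on m voters. Equivalently: for every real α ≥ 1, if every simple game on n−1 voters is α-roughly weighted, then χ is α-roughly weighted. -/
open Finset

/-- `c_S(m)`: the maximum critical threshold value among simple games on `m` voters. -/
noncomputable def cS (m : ℕ) : ℝ :=
  sSup {α : ℝ | ∃ χ : Finset (Fin m) → Bool, SimpleGame χ ∧ α = mu χ}

lemma rw_nonneg {k : ℕ} {f : Finset (Fin k) → Bool} {α : ℝ}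
    (hmono : ∀ S T : Finset (Fin k), S ⊆ T → f S = true → f T = true)
    (h : RoughlyWeighted f α) :
    ∃ w : Fin k → ℝ, (∀ j, 0 ≤ w j) ∧
      (∀ S, f S = true → 1 ≤ ∑ i ∈ S, w i) ∧
      (∀ S, f S = false → ∑ i ∈ S, w i ≤ α) := by
  classical
  obtain ⟨w, hw1, hw2⟩ := h
  refine ⟨fun j => max (w j) 0, fun j => le_max_right _ _, fun S hS => (hw1 S hS).trans
    (Finset.sum_le_sum fun j _ => le_max_left _ _), fun S hS => ?_⟩
  have key : ∑ j ∈ S, max (w j) 0 = ∑ j ∈ S.filter (fun j => 0 ≤ w j), w j := by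
    rw [Finset.sum_filter]
    refine Finset.sum_congr rfl fun j _ => ?_
    split_ifs with h
    · exact max_eq_left h
    · exact max_eq_right (le_of_not_ge h)
  rw [key]
  refine hw2 _ ?_
  cases hfl : f (S.filter fun j => 0 ≤ w j) with
  | false => rfl
  | true => exact absurd (hmono _ _ (Finset.filter_subset _ _) hfl) (by simp [hS])

lemma key2 {m : ℕ} (hm : 0 < m) (χ : Finset (Fin (m + 1)) → Bool) (hχ : SimpleGame χ)
    (i : Fin (m + 1)) (hi : χ {i} = true) :
    ∃ χ' : Finset (Fin m) → Bool, SimpleGame χ' ∧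
      ∀ α : ℝ, 1 ≤ α → RoughlyWeighted χ' α → RoughlyWeighted χ α := by
  classical
  obtain ⟨h0, hu, hmono⟩ := hχ
  set e : Fin m ↪ Fin (m + 1) := ⟨i.succAbove, Fin.succAbove_right_injective⟩ with he
  have hmem : ∀ j : Fin (m + 1), j ∈ univ.map e ↔ j ≠ i := by
    intro j
    simp only [Finset.mem_map, Finset.mem_univ, true_and, he, Function.Embedding.coeFn_mk]
    constructor
    · rintro ⟨b, rfl⟩; exact Fin.succAbove_ne i b
    · exact Fin.exists_succAbove_eq
  cases ht : χ (univ.map e) with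
  | false =>
    haveI : Nonempty (Fin m) := ⟨⟨0, hm⟩⟩
    refine ⟨fun S => decide (S = univ), ⟨?_, ?_, ?_⟩, ?_⟩
    · simpa using (Finset.univ_nonempty (α := Fin m)).ne_empty.symm
    · simp
    · intro S T hST hS
      simp only [decide_eq_true_eq] at hS ⊢
      subst hS
      exact Finset.univ_subset_iff.mp hST
    · intro α hα _
      refine ⟨fun j => if j = i then 1 else 0, ?_, ?_⟩
      · intro S hS
        have hiS : i ∈ S := by
          by_contra hiS
          have hsub : S ⊆ univ.map e := fun j hj =>
            (hmem j).mpr (fun h => hiS (h ▸ hj))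
          exact absurd (hmono _ _ hsub hS) (by simp [ht])
        rw [Finset.sum_ite_eq' S i (fun _ => (1 : ℝ)), if_pos hiS]
      · intro S hS
        rw [Finset.sum_ite_eq' S i (fun _ => (1 : ℝ))]
        split_ifs <;> linarith
  | true =>
    set χ' : Finset (Fin m) → Bool := fun S => χ (S.map e) with hχ'
    have hχ'mono : ∀ S T : Finset (Fin m), S ⊆ T → χ' S = true → χ' T = true :=
      fun S T hST h => hmono _ _ (Finset.map_subset_map.mpr hST) h
    refine ⟨χ', ⟨by simpa [hχ'] using h0, by simpa [hχ'] using ht, hχ'mono⟩, ?_⟩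
    intro α hα hRW
    obtain ⟨w', hw0, hw1, hw2⟩ := rw_nonneg hχ'mono hRW
    set w : Fin (m + 1) → ℝ := fun j =>
      if h : j = i then α else w' (Fin.exists_succAbove_eq h).choose with hw
    have hwe : ∀ b : Fin m, w (e b) = w' b := by
      intro b
      have hne : (e b : Fin (m + 1)) ≠ i := Fin.succAbove_ne i b
      rw [hw]
      simp only [dif_neg hne]
      congr 1
      exact Fin.succAbove_right_injective (Fin.exists_succAbove_eq hne).choose_spec
    have hw0' : ∀ j, 0 ≤ w j := by
      intro j
      rw [hw]
      dsimp only
      split_ifs with h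
      · linarith
      · exact hw0 _
    have hwi : w i = α := by rw [hw]; simp
    have hpre : ∀ S : Finset (Fin (m + 1)), i ∉ S →
        ((univ.filter fun b => e b ∈ S).map e = S) := by
      intro S hiS
      ext j
      simp only [Finset.mem_map, Finset.mem_filter, Finset.mem_univ, true_and]
      constructor
      · rintro ⟨b, hb, rfl⟩; exact hb
      · intro hj
        obtain ⟨b, hb⟩ := Fin.exists_succAbove_eq (fun h : j = i => hiS (h ▸ hj))
        have hbe : e b = j := hb
        exact ⟨b, hbe ▸ hj, hbe⟩
    refine ⟨w, ?_, ?_⟩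
    · intro S hS
      by_cases hiS : i ∈ S
      · calc (1 : ℝ) ≤ α := hα
          _ = w i := hwi.symm
          _ ≤ ∑ j ∈ S, w j := Finset.single_le_sum (fun j _ => hw0' j) hiS
      · have hmap := hpre S hiS
        rw [← hmap, Finset.sum_map]
        simp only [hwe]
        exact hw1 _ (by rw [hχ']; dsimp only; rw [hmap]; exact hS)
    · intro S hS
      have hiS : i ∉ S := fun h => by
        have := hmono {i} S (Finset.singleton_subset_iff.mpr h) hi
        simp [this] at hS
      have hmap := hpre S hiS
      rw [← hmap, Finset.sum_map]
      simp only [hwe]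
      exact hw2 _ (by rw [hχ']; dsimp only; rw [hmap]; exact hS)

lemma mem_threshold {k : ℕ} (g : Finset (Fin k) → Bool) (hg : SimpleGame g) :
    max 1 (k : ℝ) ∈ {α : ℝ | 1 ≤ α ∧ RoughlyWeighted g α} := by
  refine ⟨le_max_left _ _, fun _ => 1, ?_, ?_⟩
  · intro S hS
    have hne : S ≠ ∅ := fun h => by rw [h, hg.1] at hS; exact absurd hS (by simp)
    have h1 : 1 ≤ S.card := Finset.card_pos.mpr (Finset.nonempty_iff_ne_empty.mpr hne)
    have : (1 : ℝ) ≤ (S.card : ℝ) := by exact_mod_cast h1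
    simpa using this
  · intro S _
    have hcard : (S.card : ℝ) ≤ (k : ℝ) := by
      exact_mod_cast (Finset.card_le_univ S).trans_eq (by simp)
    simp only [Finset.sum_const, nsmul_eq_mul, mul_one]
    exact hcard.trans (le_max_right _ _)

/-- if a simple game on `n ≥ 2` voters has a winning singleton, then
`μ(χ) ≤ c_S(n-1)`; equivalently, any `α ≥ 1` such that all simple games on `n-1`
voters are `α`-roughly weighted also works for `χ`. -/
theorem reduction_winning_singleton (n : ℕ) (hn : 2 ≤ n)
    (χ : Finset (Fin n) → Bool) (hχ : SimpleGame χ)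
    (i : Fin n) (hi : χ {i} = true) :
    mu χ ≤ cS (n - 1) ∧
    ∀ α : ℝ, 1 ≤ α →
      (∀ χ' : Finset (Fin (n - 1)) → Bool, SimpleGame χ' → RoughlyWeighted χ' α) →
      RoughlyWeighted χ α := by
  obtain ⟨m, rfl⟩ : ∃ m, n = m + 1 := ⟨n - 1, by omega⟩
  have hm : 0 < m := by omega
  obtain ⟨χ', hχ'sg, himp⟩ := key2 hm χ hχ i hi
  constructor
  · have hAχ'ne : {α : ℝ | 1 ≤ α ∧ RoughlyWeighted χ' α}.Nonempty :=
      ⟨_, mem_threshold χ' hχ'sg⟩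
    have hbdd : BddBelow {α : ℝ | 1 ≤ α ∧ RoughlyWeighted χ α} := ⟨1, fun x hx => hx.1⟩
    have h1 : mu χ ≤ mu χ' := by
      apply csInf_le_csInf hbdd hAχ'ne
      rintro α ⟨hα1, hαrw⟩
      exact ⟨hα1, himp α hα1 hαrw⟩
    have h2 : mu χ' ≤ cS m := by
      apply le_csSup
      · refine ⟨max 1 (m : ℝ), ?_⟩
        rintro x ⟨g, hg, rfl⟩
        exact csInf_le ⟨1, fun y hy => hy.1⟩ (mem_threshold g hg)
      · exact ⟨χ', hχ'sg, rfl⟩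
    exact h1.trans h2
  · intro α hα H
    exact himp α hα (H χ' hχ'sg)
end

section
/- Let n ≥ 1, let q > 0 and q' be real numbers, let w_1,…,w_n ≥ 0, and let χ : 2^N → {0,1} be defined by χ(S) = 1 if and only if ∑_{i∈S} w_i ≥ q and |S| ≥ q' (a game with consensus, i.e. the intersection of the weighted game [q; w_1,…,w_n] with the symmetric game [q'; 1,…,1]). If χ is a simple game (χ(∅) = 0 and χ(N) = 1), then μ(χ) ≤ √n; that is, χ is √n-roughly weighted. -/
open Finset

/-- a game with consensus, i.e. the intersection of a weighted game
`[q; w₁,…,wₙ]` with a symmetric game `[q'; 1,…,1]`, has critical threshold value at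
most `√n`. -/
theorem game_with_consensus_sqrt_bound (n : ℕ) (hn : 1 ≤ n)
    (q q' : ℝ) (hq : 0 < q) (w : Fin n → ℝ) (hw : ∀ i : Fin n, 0 ≤ w i)
    (χ : Finset (Fin n) → Bool)
    (hdef : ∀ S : Finset (Fin n),
      χ S = true ↔ (q ≤ ∑ i ∈ S, w i ∧ q' ≤ (S.card : ℝ)))
    (h0 : χ ∅ = false) (hN : χ Finset.univ = true) :
    mu χ ≤ Real.sqrt n ∧ RoughlyWeighted χ (Real.sqrt n) := by
  set s := Real.sqrt n with hs
  have hn1 : (1:ℝ) ≤ n := by exact_mod_cast hn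
  have hs1 : 1 ≤ s := by
    rw [hs, show (1:ℝ) = Real.sqrt 1 by simp]
    exact Real.sqrt_le_sqrt hn1
  have hs0 : 0 < s := lt_of_lt_of_le one_pos hs1
  have hss : s * s = n := Real.mul_self_sqrt (by positivity)
  have hRW : RoughlyWeighted χ s := by
    by_cases hqs : q' ≤ s
    · refine ⟨fun i => min (w i / q) 1, ?_, ?_⟩
      · intro S hS
        obtain ⟨hw1, hc⟩ := (hdef S).mp hS
        by_cases hex : ∃ i ∈ S, 1 ≤ w i / q
        · obtain ⟨i, hi, h1⟩ := hex
          calc (1:ℝ) = min (w i / q) 1 := (min_eq_right h1).symm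
            _ ≤ ∑ j ∈ S, min (w j / q) 1 :=
              Finset.single_le_sum (f := fun j => min (w j / q) 1)
                (fun j _ => le_min (div_nonneg (hw j) hq.le) zero_le_one) hi
        · push_neg at hex
          have heq : ∑ j ∈ S, min (w j / q) 1 = ∑ j ∈ S, w j / q :=
            Finset.sum_congr rfl fun j hj => min_eq_left (le_of_lt (hex j hj))
          rw [heq, ← Finset.sum_div, le_div_iff₀ hq]
          linarith
      · intro S hS
        have hnot : ¬ (q ≤ ∑ i ∈ S, w i ∧ q' ≤ (S.card : ℝ)) := by
          intro h
          rw [(hdef S).mpr h] at hS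
          simp at hS
        push_neg at hnot
        by_cases hwq : q ≤ ∑ i ∈ S, w i
        · have hcard := hnot hwq
          calc ∑ j ∈ S, min (w j / q) 1 ≤ ∑ j ∈ S, (1:ℝ) :=
                Finset.sum_le_sum fun j _ => min_le_right _ _
            _ = S.card := by simp
            _ ≤ s := le_of_lt (lt_of_lt_of_le hcard hqs)
        · push_neg at hwq
          calc ∑ j ∈ S, min (w j / q) 1 ≤ ∑ j ∈ S, w j / q :=
                Finset.sum_le_sum fun j _ => min_le_left _ _
            _ = (∑ j ∈ S, w j) / q := (Finset.sum_div _ _ _).symm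
            _ ≤ 1 := by rw [div_le_one hq]; linarith
            _ ≤ s := hs1
    · push_neg at hqs
      have hq'0 : 0 < q' := lt_trans hs0 hqs
      refine ⟨fun _ => 1 / q', ?_, ?_⟩
      · intro S hS
        obtain ⟨_, hc⟩ := (hdef S).mp hS
        rw [Finset.sum_const, nsmul_eq_mul, mul_one_div, le_div_iff₀ hq'0, one_mul]
        exact hc
      · intro S hS
        rw [Finset.sum_const, nsmul_eq_mul, mul_one_div]
        have hcn : (S.card : ℝ) ≤ n := by
          exact_mod_cast (Finset.card_le_card (Finset.subset_univ S)).trans_eq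
            (by simp)
        have hns : (n:ℝ) / s = s := by
          rw [← hss, mul_div_assoc, div_self hs0.ne', mul_one]
        calc (S.card : ℝ) / q' ≤ (n:ℝ) / q' :=
              by gcongr
          _ ≤ (n:ℝ) / s := by
              apply div_le_div_of_nonneg_left (by positivity) hs0 (le_of_lt hqs)
          _ = s := hns
  have hmem : s ∈ {α : ℝ | 1 ≤ α ∧ RoughlyWeighted χ α} := ⟨hs1, hRW⟩
  have hbdd : BddBelow {α : ℝ | 1 ≤ α ∧ RoughlyWeighted χ α} := ⟨1, fun a ha => ha.1⟩
  exact ⟨csInf_le hbdd hmem, hRW⟩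
end

section
/- Let N = {1,…,n} be partitioned into nonempty classes N_1,…,N_t, let a = (a_1,…,a_t) be an integer vector with 0 ≤ a_h ≤ |N_h| for all h and a_1 ≥ 1, and let χ : 2^N → {0,1} be defined by χ(S) = 1 if and only if ∑_{h=1}^k |S ∩ N_h| ≥ ∑_{h=1}^k a_h for all k = 1,…,t (the complete simple game with unique shift-minimal winning vector a). Then χ is a simple game and μ(χ) ≤ √n; that is, χ is √n-roughly weighted. -/
open Finset

private lemma abel_nat (t : ℕ) (x y : ℕ → ℝ) (c : ℕ → ℝ)
    (hc : ∀ i, i < t → 0 ≤ c i)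
    (hmono : ∀ i j, i ≤ j → j < t → c j ≤ c i)
    (hxy : ∀ k, k < t → ∑ h ∈ range (k+1), x h ≤ ∑ h ∈ range (k+1), y h) :
    ∑ h ∈ range t, c h * x h ≤ ∑ h ∈ range t, c h * y h := by
  induction t generalizing c with
  | zero => simp
  | succ t ih =>
    have key : ∀ z : ℕ → ℝ, ∑ h ∈ range (t+1), c h * z h
        = (∑ h ∈ range t, (c h - c t) * z h) + c t * ∑ h ∈ range (t+1), z h := by
      intro z
      rw [Finset.sum_range_succ z, Finset.sum_range_succ (fun h => c h * z h)]
      simp only [sub_mul]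
      rw [Finset.sum_sub_distrib, ← Finset.mul_sum]
      ring
    rw [key x, key y]
    have h1 : ∑ h ∈ range t, (c h - c t) * x h ≤ ∑ h ∈ range t, (c h - c t) * y h := by
      refine ih (fun i => c i - c t) (fun i hi => sub_nonneg.mpr (hmono i t hi.le (Nat.lt_succ_self t)))
        (fun i j hij hj => by
          have := hmono i j hij (hj.trans (Nat.lt_succ_self t))
          show c j - c t ≤ c i - c t
          linarith)
        (fun k hk => hxy k (hk.trans (Nat.lt_succ_self t)))
    have h2 : c t * ∑ h ∈ range (t+1), x h ≤ c t * ∑ h ∈ range (t+1), y h :=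
      mul_le_mul_of_nonneg_left (hxy t (Nat.lt_succ_self t)) (hc t (Nat.lt_succ_self t))
    linarith

private lemma sum_Iic_eq_sum_range {t : ℕ} (f : Fin t → ℕ) (k : Fin t) :
    ∑ h ∈ Iic k, f h
      = ∑ i ∈ range (k.val + 1), (if h : i < t then f ⟨i, h⟩ else 0) := by
  have h0 : Iic k = Finset.univ.filter (fun h => h ≤ k) := by ext h; simp
  rw [h0, Finset.sum_filter]
  have h2 : ∀ h : Fin t, (if h ≤ k then f h else 0)
      = (fun i => if hi : i < t then (if i ≤ k.val then f ⟨i, hi⟩ else 0) else 0) h.val := by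
    intro h
    show (if h ≤ k then f h else 0)
      = if hi : (h:ℕ) < t then (if (h:ℕ) ≤ k.val then f ⟨(h:ℕ), hi⟩ else 0) else 0
    rw [dif_pos h.isLt]
    simp only [Fin.le_def, Fin.eta]
  rw [Finset.sum_congr rfl (fun h _ => h2 h)]
  rw [Fin.sum_univ_eq_sum_range (fun i => if hi : i < t then (if i ≤ k.val then f ⟨i, hi⟩ else 0) else 0) t]
  have h3 : ∀ i, (if hi : i < t then (if i ≤ k.val then f ⟨i, hi⟩ else 0) else 0)
      = (if i ≤ k.val then (if hi : i < t then f ⟨i, hi⟩ else 0) else 0) := by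
    intro i; split_ifs <;> rfl
  simp only [h3]
  rw [← Finset.sum_filter]
  congr 1
  ext i
  have := k.isLt
  simp only [Finset.mem_filter, Finset.mem_range]
  omega

/-- the complete simple game with a unique shift-minimal winning
vector `a` on classes `N₁,…,N_t` is a simple game with critical threshold value at
most `√n`. -/
theorem unique_shift_minimal_winning_vector_bound (n t : ℕ) (ht : 0 < t)
    (P : Fin t → Finset (Fin n))
    (hPne : ∀ h : Fin t, (P h).Nonempty)
    (hPdisj : ∀ h h' : Fin t, h ≠ h' → Disjoint (P h) (P h'))
    (hPcover : (Finset.univ : Finset (Fin n)) = Finset.univ.biUnion P)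
    (a : Fin t → ℕ) (ha : ∀ h : Fin t, a h ≤ (P h).card)
    (ha1 : 1 ≤ a ⟨0, ht⟩)
    (χ : Finset (Fin n) → Bool)
    (hdef : ∀ S : Finset (Fin n),
      χ S = true ↔ ∀ k : Fin t,
        (∑ h ∈ Finset.Iic k, a h) ≤ ∑ h ∈ Finset.Iic k, (S ∩ P h).card) :
    SimpleGame χ ∧ mu χ ≤ Real.sqrt n ∧ RoughlyWeighted χ (Real.sqrt n) := by
  classical
  -- basic facts
  obtain ⟨x0, hx0⟩ := hPne ⟨0, ht⟩
  have hn : 0 < n := x0.pos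
  have hsq1 : (1:ℝ) ≤ Real.sqrt n := Real.one_le_sqrt.mpr (by exact_mod_cast hn)
  have hsqpos : (0:ℝ) < Real.sqrt n := lt_of_lt_of_le one_pos hsq1
  have hnR : (0:ℝ) < (n:ℝ) := by exact_mod_cast hn
  -- ℕ-indexed data
  set aN : ℕ → ℕ := fun i => if h : i < t then a ⟨i, h⟩ else 0 with haN_def
  set sN : Finset (Fin n) → ℕ → ℕ :=
    fun S i => if h : i < t then (S ∩ P ⟨i, h⟩).card else 0 with hsN_def
  set A' : ℕ → ℕ := fun k => ∑ i ∈ Finset.range k, aN i with hA'_def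
  have haN0 : aN 0 = a ⟨0, ht⟩ := by simp [haN_def, ht]
  -- reformulated definition
  have hdef' : ∀ S : Finset (Fin n), χ S = true ↔
      ∀ k, k < t → A' (k+1) ≤ ∑ i ∈ Finset.range (k+1), sN S i := by
    intro S
    rw [hdef S]
    constructor
    · intro H k hk
      have := H ⟨k, hk⟩
      rwa [sum_Iic_eq_sum_range a ⟨k, hk⟩, sum_Iic_eq_sum_range (fun h => (S ∩ P h).card) ⟨k, hk⟩] at this
    · intro H k
      have := H k.val k.isLt
      rwa [sum_Iic_eq_sum_range a k, sum_Iic_eq_sum_range (fun h => (S ∩ P h).card) k]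
  -- class assignment
  have hmem : ∀ i : Fin n, ∃ h : Fin t, i ∈ P h := by
    intro i
    have : i ∈ Finset.univ.biUnion P := by rw [← hPcover]; exact mem_univ i
    simpa using this
  choose cls hcls using hmem
  have hcls_eq : ∀ (h : Fin t) (i : Fin n), i ∈ P h → cls i = h := by
    intro h i hi
    by_contra hne
    exact Finset.disjoint_left.mp (hPdisj (cls i) h hne) (hcls i) hi
  -- decomposition of coalitions
  have hSdecomp : ∀ S : Finset (Fin n), S = Finset.univ.biUnion (fun h => S ∩ P h) := by
    intro S; ext i
    simp only [Finset.mem_biUnion, Finset.mem_univ, true_and, Finset.mem_inter]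
    exact ⟨fun hi => ⟨cls i, hi, hcls i⟩, fun ⟨h, hi, _⟩ => hi⟩
  have hcard : ∀ S : Finset (Fin n), ∑ i ∈ Finset.range t, sN S i = S.card := by
    intro S
    rw [← Fin.sum_univ_eq_sum_range (fun i => sN S i) t]
    conv_rhs => rw [hSdecomp S]
    rw [Finset.card_biUnion (fun h _ h' _ hne =>
      (hPdisj h h' hne).mono inter_subset_right inter_subset_right)]
    exact Finset.sum_congr rfl (fun h _ => by simp [hsN_def, h.isLt])
  have hslen : ∀ S : Finset (Fin n), ∑ i ∈ Finset.range t, sN S i ≤ n := by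
    intro S
    rw [hcard S]
    simpa using Finset.card_le_univ S
  -- weight sum decomposition
  have hwsum : ∀ (c : ℕ → ℝ) (S : Finset (Fin n)),
      ∑ i ∈ S, c (cls i).val = ∑ i ∈ Finset.range t, c i * (sN S i : ℝ) := by
    intro c S
    conv_lhs => rw [hSdecomp S]
    rw [Finset.sum_biUnion ?hd]
    case hd =>
      intro h _ h' _ hne
      exact (hPdisj h h' hne).mono inter_subset_right inter_subset_right
    rw [← Fin.sum_univ_eq_sum_range (fun i => c i * (sN S i : ℝ)) t]
    refine Finset.sum_congr rfl (fun h _ => ?_)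
    rw [Finset.sum_congr rfl (fun i hi => by rw [hcls_eq h i (Finset.mem_inter.mp hi).2])]
    rw [Finset.sum_const, nsmul_eq_mul]
    simp [hsN_def, h.isLt, mul_comm]
  -- basic facts about A'
  have hA'mono : Monotone A' := fun i j hij =>
    Finset.sum_le_sum_of_subset (Finset.range_subset_range.mpr hij)
  have hA'le : ∀ i, A' i ≤ A' t := by
    intro i
    rcases le_or_gt i t with h | h
    · exact hA'mono h
    · have h1 : A' t + ∑ j ∈ Finset.Ico t i, aN j = A' i :=
        Finset.sum_range_add_sum_Ico aN h.le
      have h2 : ∑ j ∈ Finset.Ico t i, aN j = 0 :=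
        Finset.sum_eq_zero (fun j hj => by
          have := (Finset.mem_Ico.mp hj).1
          simp only [haN_def]
          rw [dif_neg (by omega)])
      omega
  have hA'1 : ∀ i, 1 ≤ i → 1 ≤ A' i := by
    intro i hi
    calc 1 ≤ aN 0 := by rw [haN0]; exact ha1
    _ ≤ A' i := Finset.single_le_sum (fun j _ => Nat.zero_le _) (Finset.mem_range.mpr hi)
  have hAt1 : 1 ≤ A' t := hA'1 t ht
  -- rough weighting
  have hRW : RoughlyWeighted χ (Real.sqrt n) := by
    rcases le_total (Real.sqrt n) ((A' t : ℝ)) with hcase | hcase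
    · -- Case 1: √n ≤ A; constant weights 1/A
      set c : ℕ → ℝ := fun _ => 1 / (A' t : ℝ) with hc_def
      have hApos : (0:ℝ) < (A' t : ℝ) := by exact_mod_cast hAt1
      have hconst : ∀ S : Finset (Fin n), ∑ i ∈ Finset.range t, c i * (sN S i:ℝ)
          = (∑ i ∈ Finset.range t, (sN S i:ℝ)) / (A' t : ℝ) := by
        intro S
        rw [Finset.sum_div]
        exact Finset.sum_congr rfl fun i _ => by rw [hc_def]; ring
      refine ⟨fun i => c (cls i).val, ?_, ?_⟩
      · intro S hS
        rw [hwsum c S, hconst S]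
        have hkey := (hdef' S).mp hS (t-1) (by omega)
        rw [show t - 1 + 1 = t by omega] at hkey
        have h1 : (A' t : ℝ) ≤ ∑ i ∈ Finset.range t, (sN S i : ℝ) := by
          push_cast
          exact_mod_cast hkey
        rw [le_div_iff₀ hApos]
        linarith
      · intro S _
        rw [hwsum c S, hconst S]
        have h1 : ∑ i ∈ Finset.range t, (sN S i : ℝ) ≤ (n:ℝ) := by
          push_cast
          exact_mod_cast hslen S
        have h2 : (∑ i ∈ Finset.range t, (sN S i:ℝ)) / (A' t : ℝ) ≤ (n:ℝ) / (A' t:ℝ) := by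
          gcongr
        have h3 : (n:ℝ) / (A' t:ℝ) ≤ (n:ℝ) / Real.sqrt n := by
          gcongr
        calc (∑ i ∈ Finset.range t, (sN S i:ℝ)) / (A' t : ℝ) ≤ (n:ℝ) / Real.sqrt n :=
              le_trans h2 h3
        _ = Real.sqrt n := Real.div_sqrt
    · -- Case 2: A ≤ √n
      set α : ℝ := ((a ⟨0, ht⟩ : ℕ) : ℝ) with hα_def
      have hα1 : (1:ℝ) ≤ α := by simp only [hα_def]; exact_mod_cast ha1
      have hαpos : (0:ℝ) < α := lt_of_lt_of_le one_pos hα1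
      set X : ℕ → ℝ := fun i => ((A' i : ℝ) - 1) / α with hX_def
      set c : ℕ → ℝ := fun i => if i = 0 then 1/α
        else min (1/α) ((Real.sqrt n - X i)/n) with hc_def
      have hXmono : ∀ i j, i ≤ j → X i ≤ X j := by
        intro i j hij
        simp only [hX_def]
        gcongr
        exact_mod_cast hA'mono hij
      have hX_le : ∀ i, X i ≤ Real.sqrt n - 1 := by
        intro i
        have h1 : (A' i : ℝ) ≤ Real.sqrt n :=
          le_trans (by exact_mod_cast hA'le i) hcase
        simp only [hX_def]
        rw [div_le_iff₀ hαpos]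
        nlinarith [mul_nonneg (sub_nonneg.mpr hsq1) (sub_nonneg.mpr hα1)]
      have hc0 : c 0 = 1/α := by simp [hc_def]
      have hc_le0 : ∀ i, c i ≤ 1/α := by
        intro i
        rcases Nat.eq_zero_or_pos i with rfl | hi
        · rw [hc0]
        · simp only [hc_def]
          rw [if_neg (by omega)]
          exact min_le_left _ _
      have hc_nonneg : ∀ i, 0 ≤ c i := by
        intro i
        rcases Nat.eq_zero_or_pos i with rfl | hi
        · rw [hc0]; positivity
        · simp only [hc_def]
          rw [if_neg (by omega)]
          refine le_min (by positivity) (div_nonneg ?_ hnR.le)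
          have := hX_le i
          linarith
      have hc_anti : ∀ i j, i ≤ j → c j ≤ c i := by
        intro i j hij
        rcases Nat.eq_zero_or_pos i with rfl | hi
        · exact (hc_le0 j).trans_eq hc0.symm
        · have hj : 1 ≤ j := le_trans hi hij
          simp only [hc_def]
          rw [if_neg (by omega), if_neg (by omega)]
          refine min_le_min le_rfl ?_
          gcongr
          exact hXmono i j hij
      refine ⟨fun i => c (cls i).val, ?_, ?_⟩
      · -- winning coalitions
        intro S hS
        rw [hwsum c S]
        have habel : ∑ i ∈ Finset.range t, c i * (aN i : ℝ)
            ≤ ∑ i ∈ Finset.range t, c i * (sN S i:ℝ) := by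
          refine abel_nat t (fun i => (aN i:ℝ)) (fun i => (sN S i:ℝ)) c
            (fun i _ => hc_nonneg i) (fun i j hij _ => hc_anti i j hij) ?_
          intro k hk
          have := (hdef' S).mp hS k hk
          push_cast
          exact_mod_cast this
        have h0mem : (0:ℕ) ∈ Finset.range t := Finset.mem_range.mpr ht
        have hsingle : c 0 * ((aN 0 : ℕ):ℝ) ≤ ∑ i ∈ Finset.range t, c i * (aN i:ℝ) :=
          Finset.single_le_sum (f := fun i => c i * (aN i:ℝ))
            (fun i _ => mul_nonneg (hc_nonneg i) (by positivity)) h0mem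
        have hval : c 0 * (aN 0 : ℝ) = 1 := by
          rw [hc0, haN0]
          exact one_div_mul_cancel (ne_of_gt hαpos)
        rw [hval] at hsingle
        linarith
      · -- losing coalitions
        intro S hS
        rw [hwsum c S]
        have hne : χ S ≠ true := by simp [hS]
        have hfalse : ¬ ∀ k, k < t → A' (k+1) ≤ ∑ i ∈ Finset.range (k+1), sN S i :=
          fun H => hne ((hdef' S).mpr H)
        push_neg at hfalse
        obtain ⟨k, hk, hlt⟩ := hfalse
        have hsplit : ∑ i ∈ Finset.range t, c i * (sN S i:ℝ)
            = (∑ i ∈ Finset.range (k+1), c i * (sN S i:ℝ))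
              + ∑ i ∈ Finset.Ico (k+1) t, c i * (sN S i:ℝ) :=
          (Finset.sum_range_add_sum_Ico _ (by omega)).symm
        have hpre : ∑ i ∈ Finset.range (k+1), c i * (sN S i:ℝ) ≤ X (k+1) := by
          have h1 : ∑ i ∈ Finset.range (k+1), c i * (sN S i:ℝ)
              ≤ ∑ i ∈ Finset.range (k+1), (1/α) * (sN S i:ℝ) :=
            Finset.sum_le_sum (fun i _ =>
              mul_le_mul_of_nonneg_right (hc_le0 i) (by positivity))
          rw [← Finset.mul_sum] at h1
          have h2 : (∑ i ∈ Finset.range (k+1), (sN S i:ℝ)) ≤ (A' (k+1):ℝ) - 1 := by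
            have h2' : (∑ i ∈ Finset.range (k+1), sN S i) + 1 ≤ A' (k+1) := hlt
            have h2'' : ((∑ i ∈ Finset.range (k+1), sN S i : ℕ) : ℝ) + 1 ≤ ((A' (k+1) : ℕ):ℝ) := by
              exact_mod_cast h2'
            push_cast at h2''
            linarith [h2'']
          calc ∑ i ∈ Finset.range (k+1), c i * (sN S i:ℝ)
              ≤ (1/α) * ∑ i ∈ Finset.range (k+1), (sN S i:ℝ) := h1
          _ ≤ (1/α) * ((A' (k+1):ℝ) - 1) := by
              apply mul_le_mul_of_nonneg_left h2 (by positivity)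
          _ = X (k+1) := by simp only [hX_def]; ring
        have hpost : ∑ i ∈ Finset.Ico (k+1) t, c i * (sN S i:ℝ)
            ≤ Real.sqrt n - X (k+1) := by
          have h1 : ∑ i ∈ Finset.Ico (k+1) t, c i * (sN S i:ℝ)
              ≤ ∑ i ∈ Finset.Ico (k+1) t, c (k+1) * (sN S i:ℝ) :=
            Finset.sum_le_sum (fun i hi => mul_le_mul_of_nonneg_right
              (hc_anti (k+1) i (Finset.mem_Ico.mp hi).1) (by positivity))
          rw [← Finset.mul_sum] at h1
          have h2 : (∑ i ∈ Finset.Ico (k+1) t, (sN S i:ℝ)) ≤ (n:ℝ) := by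
            have h2' : ∑ i ∈ Finset.Ico (k+1) t, sN S i ≤ ∑ i ∈ Finset.range t, sN S i := by
              have := Finset.sum_range_add_sum_Ico (sN S) (show k+1 ≤ t by omega)
              omega
            have h2'' := le_trans h2' (hslen S)
            push_cast
            exact_mod_cast h2''
          have h3 : c (k+1) ≤ (Real.sqrt n - X (k+1))/n := by
            simp only [hc_def]
            rw [if_neg (by omega)]
            exact min_le_right _ _
          calc ∑ i ∈ Finset.Ico (k+1) t, c i * (sN S i:ℝ)
              ≤ c (k+1) * ∑ i ∈ Finset.Ico (k+1) t, (sN S i:ℝ) := h1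
          _ ≤ c (k+1) * (n:ℝ) := mul_le_mul_of_nonneg_left h2 (hc_nonneg _)
          _ ≤ ((Real.sqrt n - X (k+1))/n) * (n:ℝ) :=
              mul_le_mul_of_nonneg_right h3 hnR.le
          _ = Real.sqrt n - X (k+1) := div_mul_cancel₀ _ (ne_of_gt hnR)
        rw [hsplit]
        linarith
  -- simple game
  have hSG : SimpleGame χ := by
    refine ⟨?_, ?_, ?_⟩
    · by_contra hne
      have hT : χ ∅ = true := by
        cases hx : χ (∅ : Finset (Fin n)) with
        | false => exact absurd hx hne
        | true => rfl
      have hc := (hdef' ∅).mp hT 0 ht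
      norm_num at hc
      have hz : sN ∅ 0 = 0 := by simp [hsN_def, ht]
      have h1 : 1 ≤ A' 1 := hA'1 1 le_rfl
      omega
    · rw [hdef' Finset.univ]
      intro k hk
      refine Finset.sum_le_sum fun i hi => ?_
      simp only [haN_def, hsN_def]
      split
      · rw [Finset.univ_inter]; exact ha _
      · exact le_rfl
    · intro S T hST hS
      rw [hdef' T]
      intro k hk
      refine le_trans ((hdef' S).mp hS k hk) (Finset.sum_le_sum fun i _ => ?_)
      simp only [hsN_def]
      split
      · exact Finset.card_le_card (Finset.inter_subset_inter hST (subset_refl _))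
      · exact le_rfl
  have hmu : mu χ ≤ Real.sqrt n :=
    csInf_le ⟨1, fun x hx => hx.1⟩ ⟨hsq1, hRW⟩
  exact ⟨hSG, hmu, hRW⟩
end
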